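/- arXiv:2304.06665 — 3 statements merged into one kernel-verified Lean document; each statement's English description precedes it below -/
import Mathlib

section
/- Let F(z) = ∑_{n=0}^∞ a_n z^n be an entire function with L := limsup_{n→∞} √n·|a_n|^{1/n} < ∞, and let τ be a real number with 0 < τ and τ·L² < e. Then for every z ∈ ℂ the integral (2πτ)^{−1/2} ∫_ℝ e^{−(z−x)²/(2τ)} F(x) dx converges absolutely and equals (e^{+τD²/2}F)(z), i.e. the heat flow of F with parameter −τ: ∑_{n=0}^∞ a_n ∑_{m=0}^{⌊n/2⌋} (n!/(m!·2^m·(n−2m)!)) z^{n−2m} τ^m. -/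
set_option maxHeartbeats 1000000

open Filter MeasureTheory Metric Set

noncomputable section

/-- The `n`-th Taylor coefficient `a_n = F^{(n)}(0)/n!` of an entire function `F`. -/
def taylorCoeff (F : ℂ → ℂ) (n : ℕ) : ℂ := iteratedDeriv n F 0 / n.factorial

/-- The heat flow `e^{-τ D²/2}` applied to the monomial `z^n`:
`∑_{m=0}^{⌊n/2⌋} ((-1)^m n!/(m! 2^m (n-2m)!)) z^{n-2m} τ^m`. -/
def heatTerm (τ z : ℂ) (n : ℕ) : ℂ :=
  ∑ m ∈ Finset.range (n / 2 + 1),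
    ((-1 : ℂ) ^ m * n.factorial / (m.factorial * 2 ^ m * (n - 2 * m).factorial)) *
      z ^ (n - 2 * m) * τ ^ m

/-- The heat flow `(e^{-τ D²/2} F)(z)`, defined via the double series applied to the Taylor
coefficients of `F`. -/
def heatFlow (F : ℂ → ℂ) (τ z : ℂ) : ℂ := ∑' n : ℕ, taylorCoeff F n * heatTerm τ z n

/-- The sequence `√n · |a_n|^{1/n}` measuring the growth of the Taylor coefficients of `F`. -/
def coefGrowthSeq (F : ℂ → ℂ) (n : ℕ) : ℝ :=
  Real.sqrt n * ‖taylorCoeff F n‖ ^ ((n : ℝ)⁻¹)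

/-- `L(F) = limsup_{n→∞} √n · |a_n|^{1/n}`. -/
def Lgrowth (F : ℂ → ℂ) : ℝ := Filter.limsup (coefGrowthSeq F) Filter.atTop

/-- coefficient -/
private def htC (n m : ℕ) : ℂ :=
  (-1 : ℂ) ^ m * n.factorial / (m.factorial * 2 ^ m * (n - 2 * m).factorial)

private lemma heatTerm_eq (τ z : ℂ) (n : ℕ) :
    heatTerm τ z n = ∑ m ∈ Finset.range (n / 2 + 1), htC n m * z ^ (n - 2 * m) * τ ^ m := rfl

/-- formal derivative of `heatTerm` in `z` -/
private def heatTermD (τ z : ℂ) (n : ℕ) : ℂ :=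
  ∑ m ∈ Finset.range (n / 2 + 1),
    htC n m * (((n - 2 * m : ℕ) : ℂ) * z ^ (n - 2 * m - 1)) * τ ^ m

private lemma hasDerivAt_heatTerm (τ z : ℂ) (n : ℕ) :
    HasDerivAt (fun w => heatTerm τ w n) (heatTermD τ z n) z := by
  simp only [heatTerm_eq, heatTermD]
  apply HasDerivAt.fun_sum
  intro m _
  simpa using ((hasDerivAt_pow (n - 2 * m) z).const_mul (htC n m)).mul_const (τ ^ m)

private lemma htC_zero (n : ℕ) : htC n 0 = 1 := by
  simp only [htC, pow_zero, one_mul, Nat.factorial_zero, Nat.cast_one, mul_one, Nat.mul_zero,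
    Nat.sub_zero]
  exact div_self (Nat.cast_ne_zero.mpr n.factorial_ne_zero)

private lemma htC_rec {n m : ℕ} (h : 2 * m + 2 ≤ n) :
    htC (n + 1) (m + 1) = htC n (m + 1) - htC n m * ((n - 2 * m : ℕ) : ℂ) := by
  obtain ⟨k, rfl⟩ : ∃ k, n = 2 * m + k + 2 := ⟨n - (2 * m + 2), by omega⟩
  have e1 : 2 * m + k + 2 + 1 - 2 * (m + 1) = k + 1 := by omega
  have e2 : 2 * m + k + 2 - 2 * (m + 1) = k := by omega
  have e3 : 2 * m + k + 2 - 2 * m = k + 2 := by omega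
  rw [htC, htC, htC, e1, e2, e3]
  have f1 : ((2 * m + k + 2 + 1).factorial : ℂ)
      = (2 * (m:ℂ) + k + 3) * (2 * m + k + 2).factorial := by
    rw [Nat.factorial_succ]; push_cast; ring
  have f2 : ((m + 1).factorial : ℂ) = ((m:ℂ) + 1) * m.factorial := by
    rw [Nat.factorial_succ]; push_cast; ring
  have f3 : ((k + 2).factorial : ℂ) = ((k:ℂ) + 2) * (((k:ℂ) + 1) * k.factorial) := by
    rw [Nat.factorial_succ, Nat.factorial_succ]; push_cast; ring
  have f4 : ((k + 1).factorial : ℂ) = ((k:ℂ) + 1) * k.factorial := by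
    rw [Nat.factorial_succ]; push_cast; ring
  rw [f1, f2, f3, f4]
  have n7 : ((2:ℂ)) ^ m ≠ 0 := pow_ne_zero _ two_ne_zero
  have n1 : (m.factorial : ℂ) ≠ 0 := Nat.cast_ne_zero.mpr (Nat.factorial_ne_zero m)
  have n2' : (k.factorial : ℂ) ≠ 0 := Nat.cast_ne_zero.mpr (Nat.factorial_ne_zero _)
  have n3 : ((2:ℂ)) ≠ 0 := two_ne_zero
  have n4 : ((m:ℂ) + 1) ≠ 0 := by
    have := Nat.cast_ne_zero (R := ℂ).mpr (show m + 1 ≠ 0 by omega); push_cast at this; exact this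
  have n5 : ((k:ℂ) + 1) ≠ 0 := by
    have := Nat.cast_ne_zero (R := ℂ).mpr (show k + 1 ≠ 0 by omega); push_cast at this; exact this
  have n6 : ((k:ℂ) + 2) ≠ 0 := by
    have := Nat.cast_ne_zero (R := ℂ).mpr (show k + 2 ≠ 0 by omega); push_cast at this; exact this
  push_cast
  rw [pow_succ, pow_succ]
  have hd1 : ((m:ℂ) + 1) * (m.factorial : ℂ) * (2 ^ m * 2) * (((k:ℂ) + 1) * (k.factorial : ℂ))
      ≠ 0 := by
    exact mul_ne_zero (mul_ne_zero (mul_ne_zero n4 n1) (mul_ne_zero n7 n3)) (mul_ne_zero n5 n2')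
  have hd2 : ((m:ℂ) + 1) * (m.factorial : ℂ) * (2 ^ m * 2) * (k.factorial : ℂ) ≠ 0 :=
    mul_ne_zero (mul_ne_zero (mul_ne_zero n4 n1) (mul_ne_zero n7 n3)) n2'
  have hd3 : (m.factorial : ℂ) * 2 ^ m * (((k:ℂ) + 2) * (((k:ℂ) + 1) * (k.factorial : ℂ)))
      ≠ 0 := by
    exact mul_ne_zero (mul_ne_zero n1 n7) (mul_ne_zero n6 (mul_ne_zero n5 n2'))
  rw [div_mul_eq_mul_div, div_sub_div _ _ hd2 hd3, div_eq_div_iff hd1 (mul_ne_zero hd2 hd3)]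
  ring

private lemma htC_odd_top (p : ℕ) : htC (2 * p + 2) (p + 1) = - htC (2 * p + 1) p := by
  have e1 : 2 * p + 2 - 2 * (p + 1) = 0 := by omega
  have e2 : 2 * p + 1 - 2 * p = 1 := by omega
  rw [htC, htC, e1, e2]
  have f1 : ((2 * p + 2).factorial : ℂ) = (2 * (p:ℂ) + 2) * (2 * p + 1).factorial := by
    rw [show 2 * p + 2 = (2 * p + 1) + 1 from rfl, Nat.factorial_succ]; push_cast; ring
  have f2 : ((p + 1).factorial : ℂ) = ((p:ℂ) + 1) * p.factorial := by
    rw [Nat.factorial_succ]; push_cast; ring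
  rw [f1, f2]
  have n1 : (p.factorial : ℂ) ≠ 0 := Nat.cast_ne_zero.mpr (Nat.factorial_ne_zero p)
  have n2 : ((2 * p + 1).factorial : ℂ) ≠ 0 := Nat.cast_ne_zero.mpr (Nat.factorial_ne_zero _)
  have n3 : ((2:ℂ)) ≠ 0 := two_ne_zero
  have n4 : ((p:ℂ) + 1) ≠ 0 := by
    have := Nat.cast_ne_zero (R := ℂ).mpr (show p + 1 ≠ 0 by omega); push_cast at this; exact this
  simp only [Nat.factorial_zero, Nat.factorial_one]
  field_simp
  ring

private lemma sum_shift_sub {M : Type*} [AddCommGroup M] (p : ℕ) (f g h : ℕ → M)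
    (h0 : f 0 = g 0) (hstep : ∀ m < p, f (m + 1) = g (m + 1) - h m) (htop : h p = 0) :
    ∑ m ∈ Finset.range (p + 1), f m
      = ∑ m ∈ Finset.range (p + 1), g m - ∑ m ∈ Finset.range (p + 1), h m := by
  rw [Finset.sum_range_succ' f, Finset.sum_range_succ' g, Finset.sum_range_succ h, htop, add_zero,
    Finset.sum_congr rfl (fun m hm => hstep m (Finset.mem_range.mp hm)),
    Finset.sum_sub_distrib, h0]
  abel

private lemma sum_shift_sub' {M : Type*} [AddCommGroup M] (p : ℕ) (f g h : ℕ → M)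
    (h0 : f 0 = g 0) (hstep : ∀ m < p, f (m + 1) = g (m + 1) - h m) (htop : f (p + 1) = - h p) :
    ∑ m ∈ Finset.range (p + 2), f m
      = ∑ m ∈ Finset.range (p + 1), g m - ∑ m ∈ Finset.range (p + 1), h m := by
  rw [Finset.sum_range_succ f, Finset.sum_range_succ' f, Finset.sum_range_succ' g,
    Finset.sum_range_succ h,
    Finset.sum_congr rfl (fun m hm => hstep m (Finset.mem_range.mp hm)),
    Finset.sum_sub_distrib, h0, htop]
  abel

private lemma heatTerm_succ (τ z : ℂ) (n : ℕ) :
    heatTerm τ z (n + 1) = z * heatTerm τ z n - τ * heatTermD τ z n := by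
  rw [heatTerm_eq, heatTerm_eq, heatTermD, Finset.mul_sum, Finset.mul_sum]
  rcases Nat.even_or_odd n with ⟨p, hp⟩ | ⟨p, hp⟩
  · obtain rfl : n = 2 * p := by omega
    have r1 : (2 * p + 1) / 2 + 1 = p + 1 := by omega
    have r2 : 2 * p / 2 + 1 = p + 1 := by omega
    rw [r1, r2]
    apply sum_shift_sub
    · have : 2 * p + 1 - 2 * 0 = 2 * p + 1 := by omega
      simp only [htC_zero, this, Nat.sub_zero, Nat.mul_zero, pow_zero, mul_one, one_mul]
      ring
    · intro m hm
      have hle : 2 * m + 2 ≤ 2 * p := by omega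
      obtain ⟨k, hk⟩ : ∃ k, 2 * p - 2 * (m + 1) = k := ⟨_, rfl⟩
      have e1 : 2 * p + 1 - 2 * (m + 1) = k + 1 := by omega
      have e3 : 2 * p - 2 * m = k + 2 := by omega
      have e4 : 2 * p - 2 * m - 1 = k + 1 := by omega
      rw [htC_rec hle, e1, hk, e4, e3]
      push_cast
      ring
    · have : 2 * p - 2 * p = 0 := by omega
      simp [this]
  · obtain rfl : n = 2 * p + 1 := by omega
    have r1 : (2 * p + 1 + 1) / 2 + 1 = p + 2 := by omega
    have r2 : (2 * p + 1) / 2 + 1 = p + 1 := by omega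
    rw [r1, r2]
    apply sum_shift_sub'
    · have : 2 * p + 1 + 1 - 2 * 0 = 2 * p + 2 := by omega
      simp only [htC_zero, this, Nat.sub_zero, Nat.mul_zero, pow_zero, mul_one, one_mul]
      ring
    · intro m hm
      have hle : 2 * m + 2 ≤ 2 * p + 1 := by omega
      obtain ⟨k, hk⟩ : ∃ k, 2 * p + 1 - 2 * (m + 1) = k := ⟨_, rfl⟩
      have e1 : 2 * p + 1 + 1 - 2 * (m + 1) = k + 1 := by omega
      have e3 : 2 * p + 1 - 2 * m = k + 2 := by omega
      have e4 : 2 * p + 1 - 2 * m - 1 = k + 1 := by omega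
      rw [htC_rec hle, e1, hk, e4, e3]
      push_cast
      ring
    · have e1 : 2 * p + 1 + 1 - 2 * (p + 1) = 0 := by omega
      have e2 : 2 * p + 1 - 2 * p = 1 := by omega
      have e3 : 2 * p + 1 - 2 * p - 1 = 0 := by omega
      rw [show 2 * p + 1 + 1 = 2 * p + 2 from rfl, htC_odd_top, e1, e3, e2]
      push_cast
      ring


private lemma log_le_div_e {u : ℝ} (hu : 0 < u) : Real.log u ≤ u / Real.exp 1 := by
  have h := Real.log_le_sub_one_of_pos (show (0:ℝ) < u / Real.exp 1 by positivity)
  rw [Real.log_div (ne_of_gt hu) (Real.exp_ne_zero 1), Real.log_exp] at h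
  linarith

private lemma pow_le_rpow_exp {t : ℝ} (ht : 0 ≤ t) (n : ℕ) :
    t ^ n ≤ (n : ℝ) ^ ((n : ℝ) / 2) * Real.exp (t ^ 2 / (2 * Real.exp 1)) := by
  rcases Nat.eq_zero_or_pos n with rfl | hn
  · simpa using Real.one_le_exp (by positivity)
  rcases eq_or_lt_of_le ht with rfl | ht
  · rw [zero_pow (by omega)]; positivity
  have hn0 : (0:ℝ) < n := by exact_mod_cast hn
  have key : (n:ℝ) * Real.log t ≤ ((n:ℝ) / 2) * Real.log n + t ^ 2 / (2 * Real.exp 1) := by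
    have hu : (0:ℝ) < t ^ 2 / n := by positivity
    have h1 := log_le_div_e hu
    rw [Real.log_div (by positivity) (ne_of_gt hn0), Real.log_pow] at h1
    have h2 : (n:ℝ) / 2 * ((2:ℕ) * Real.log t - Real.log n)
        ≤ (n:ℝ) / 2 * (t ^ 2 / n / Real.exp 1) :=
      mul_le_mul_of_nonneg_left h1 (by positivity)
    have h3 : (n:ℝ) / 2 * (t ^ 2 / n / Real.exp 1) = t ^ 2 / (2 * Real.exp 1) := by
      field_simp
    push_cast at h2
    nlinarith [h2, h3]
  calc t ^ n = Real.exp ((n:ℝ) * Real.log t) := by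
        rw [Real.exp_nat_mul, Real.exp_log ht]
    _ ≤ Real.exp (((n:ℝ) / 2) * Real.log n + t ^ 2 / (2 * Real.exp 1)) := Real.exp_le_exp.mpr key
    _ = (n : ℝ) ^ ((n : ℝ) / 2) * Real.exp (t ^ 2 / (2 * Real.exp 1)) := by
        rw [Real.exp_add, Real.rpow_def_of_pos hn0, mul_comm (Real.log _)]

private lemma abs_pow_le {s : ℝ} (hs : 0 < s) (n : ℕ) (t : ℝ) (ht : 0 ≤ t) :
    t ^ n ≤ (n : ℝ) ^ ((n : ℝ) / 2) / s ^ n * Real.exp (s ^ 2 * t ^ 2 / (2 * Real.exp 1)) := by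
  have h := pow_le_rpow_exp (t := s * t) (by positivity) n
  rw [mul_pow] at h
  have h2 : (s * t) ^ 2 = s ^ 2 * t ^ 2 := by ring
  rw [h2] at h
  rw [div_mul_eq_mul_div, le_div_iff₀ (by positivity)]
  calc t ^ n * s ^ n = s ^ n * t ^ n := by ring
    _ ≤ _ := h

private lemma norm_K (τ : ℝ) (hτ0 : 0 < τ) (z : ℂ) (x : ℝ) :
    ‖Complex.exp (-(z - (x:ℂ)) ^ 2 / (2 * (τ:ℂ)))‖
      = Real.exp (z.im ^ 2 / (2 * τ)) * Real.exp (-(x - z.re) ^ 2 / (2 * τ)) := by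
  rw [Complex.norm_exp, ← Real.exp_add]
  congr 1
  have h2 : (2 * (τ:ℂ)) = ((2 * τ : ℝ) : ℂ) := by push_cast; ring
  rw [h2, Complex.div_ofReal_re]
  have : (-(z - (x:ℂ)) ^ 2).re = z.im ^ 2 - (z.re - x) ^ 2 := by
    simp only [pow_two, Complex.neg_re, Complex.mul_re, Complex.sub_re, Complex.sub_im,
      Complex.ofReal_re, Complex.ofReal_im]
    ring
  rw [this]
  field_simp
  ring

private lemma integrable_gauss_prod (τ u c : ℝ) (hτ0 : 0 < τ) (hc : c < 1 / (2 * τ)) :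
    Integrable (fun x : ℝ => Real.exp (-(x - u) ^ 2 / (2 * τ)) * Real.exp (c * x ^ 2)) := by
  have hb : (0:ℝ) < 1 / (2 * τ) - c := by linarith
  have h := (integrable_cexp_quadratic
    (b := (((1 / (2 * τ) - c : ℝ)) : ℂ)) (by simpa using hb)
    (((u / τ : ℝ)) : ℂ) (((-(u ^ 2 / (2 * τ)) : ℝ)) : ℂ)).norm
  have heq : (fun x : ℝ => Real.exp (-(x - u) ^ 2 / (2 * τ)) * Real.exp (c * x ^ 2))
      = fun x : ℝ => ‖Complex.exp (-(((1 / (2 * τ) - c : ℝ)) : ℂ) * (x:ℂ) ^ 2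
          + (((u / τ : ℝ)) : ℂ) * (x:ℂ) + (((-(u ^ 2 / (2 * τ)) : ℝ)) : ℂ))‖ := by
    funext x
    rw [show -(((1 / (2 * τ) - c : ℝ)) : ℂ) * (x:ℂ) ^ 2 + (((u / τ : ℝ)) : ℂ) * (x:ℂ)
        + (((-(u ^ 2 / (2 * τ)) : ℝ)) : ℂ)
        = ((-(1 / (2 * τ) - c) * x ^ 2 + (u / τ) * x + (-(u ^ 2 / (2 * τ))) : ℝ) : ℂ) by
      push_cast; ring]
    rw [← Complex.ofReal_exp, Complex.norm_real, Real.norm_of_nonneg (Real.exp_pos _).le,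
      ← Real.exp_add]
    congr 1
    field_simp
    ring
  rw [heq]
  exact h


private lemma contK (τ : ℝ) (z : ℂ) (n : ℕ) :
    Continuous (fun x : ℝ => Complex.exp (-(z - (x:ℂ)) ^ 2 / (2 * (τ:ℂ))) * (x:ℂ) ^ n) := by
  fun_prop

private lemma integrable_K_pow (τ : ℝ) (hτ0 : 0 < τ) (z : ℂ) (n : ℕ) :
    Integrable (fun x : ℝ => Complex.exp (-(z - (x:ℂ)) ^ 2 / (2 * (τ:ℂ))) * (x:ℂ) ^ n) := by
  set s : ℝ := Real.sqrt (Real.exp 1 / (2 * τ)) with hs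
  have hs0 : 0 < s := Real.sqrt_pos.mpr (by positivity)
  have hs2 : s ^ 2 = Real.exp 1 / (2 * τ) := Real.sq_sqrt (by positivity)
  have hg : Integrable (fun x : ℝ =>
      Real.exp (-(x - z.re) ^ 2 / (2 * τ)) * Real.exp ((1 / (4 * τ)) * x ^ 2)) :=
    integrable_gauss_prod τ z.re (1 / (4 * τ)) hτ0 (by
      rw [div_lt_div_iff₀ (by positivity) (by positivity)]; nlinarith)
  refine ((hg.const_mul (Real.exp (z.im ^ 2 / (2 * τ)) * ((n:ℝ) ^ ((n:ℝ) / 2) / s ^ n))).mono'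
    ((contK τ z n).aestronglyMeasurable) ?_)
  filter_upwards with x
  rw [norm_mul, norm_pow, Complex.norm_real, norm_K τ hτ0 z x, Real.norm_eq_abs]
  have hb : |x| ^ n ≤ (n:ℝ) ^ ((n:ℝ) / 2) / s ^ n * Real.exp ((1 / (4 * τ)) * x ^ 2) := by
    have h := abs_pow_le hs0 n |x| (abs_nonneg x)
    have he : s ^ 2 * |x| ^ 2 / (2 * Real.exp 1) = (1 / (4 * τ)) * x ^ 2 := by
      rw [hs2, sq_abs]
      field_simp
      ring
    rwa [he] at h
  calc Real.exp (z.im ^ 2 / (2 * τ)) * Real.exp (-(x - z.re) ^ 2 / (2 * τ)) * |x| ^ n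
      ≤ Real.exp (z.im ^ 2 / (2 * τ)) * Real.exp (-(x - z.re) ^ 2 / (2 * τ))
        * ((n:ℝ) ^ ((n:ℝ) / 2) / s ^ n * Real.exp ((1 / (4 * τ)) * x ^ 2)) := by
        apply mul_le_mul_of_nonneg_left hb (by positivity)
    _ = Real.exp (z.im ^ 2 / (2 * τ)) * ((n:ℝ) ^ ((n:ℝ) / 2) / s ^ n)
        * (Real.exp (-(x - z.re) ^ 2 / (2 * τ)) * Real.exp ((1 / (4 * τ)) * x ^ 2)) := by ring

private lemma hasDerivAt_In (τ : ℝ) (hτ0 : 0 < τ) (n : ℕ) (z : ℂ) :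
    HasDerivAt (fun w : ℂ => ∫ x : ℝ, Complex.exp (-(w - (x:ℂ)) ^ 2 / (2 * (τ:ℂ))) * (x:ℂ) ^ n)
      (∫ x : ℝ, (((x:ℂ) - z) / (τ:ℂ))
        * (Complex.exp (-(z - (x:ℂ)) ^ 2 / (2 * (τ:ℂ))) * (x:ℂ) ^ n)) z := by
  set R : ℝ := ‖z‖ + 1 with hR
  set s : ℝ := Real.sqrt (Real.exp 1 / (16 * τ)) with hs
  have hs0 : 0 < s := Real.sqrt_pos.mpr (by positivity)
  have hs2 : s ^ 2 = Real.exp 1 / (16 * τ) := Real.sq_sqrt (by positivity)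
  set D : ℝ := ((n:ℝ) + 1) ^ (((n:ℝ) + 1) / 2) / s ^ (n + 1) with hD
  set Cb : ℝ := (1 / τ) * Real.exp ((R ^ 2 + 1) / (2 * τ)) * D * Real.exp (R ^ 2 / (16 * τ))
    with hCb
  have hg : Integrable (fun x : ℝ =>
      Real.exp (-(x - z.re) ^ 2 / (4 * τ)) * Real.exp ((1 / (16 * τ)) * x ^ 2)) := by
    have := integrable_gauss_prod (2 * τ) z.re (1 / (16 * τ)) (by positivity) (by
      rw [div_lt_div_iff₀ (by positivity) (by positivity)]; nlinarith)
    simpa [show 2 * (2 * τ) = 4 * τ by ring] using this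
  have key := hasDerivAt_integral_of_dominated_loc_of_deriv_le (μ := volume)
    (F := fun (w : ℂ) (x : ℝ) => Complex.exp (-(w - (x:ℂ)) ^ 2 / (2 * (τ:ℂ))) * (x:ℂ) ^ n)
    (F' := fun (w : ℂ) (x : ℝ) => (((x:ℂ) - w) / (τ:ℂ))
      * (Complex.exp (-(w - (x:ℂ)) ^ 2 / (2 * (τ:ℂ))) * (x:ℂ) ^ n))
    (x₀ := z)
    (bound := fun x : ℝ => Cb * (Real.exp (-(x - z.re) ^ 2 / (4 * τ))
      * Real.exp ((1 / (16 * τ)) * x ^ 2)))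
    (s := ball z 1) (ball_mem_nhds z one_pos)
    (Eventually.of_forall fun w => ((contK τ w n).aestronglyMeasurable))
    (integrable_K_pow τ hτ0 z n)
    (Continuous.aestronglyMeasurable (by fun_prop)) ?_ (hg.const_mul Cb) ?_
  · exact key.2
  · -- bound
    filter_upwards with x
    intro w hw
    have hwz : ‖w - z‖ < 1 := by
      simpa [dist_eq_norm] using (mem_ball.mp hw)
    have him : |w.im| ≤ R := by
      have h1 : |w.im - z.im| ≤ ‖w - z‖ := by
        simpa [Complex.sub_im] using Complex.abs_im_le_norm (w - z)
      have h2 : |z.im| ≤ ‖z‖ := Complex.abs_im_le_norm z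
      rw [hR]
      have := abs_sub_abs_le_abs_sub w.im z.im
      nlinarith [abs_nonneg (w.im - z.im)]
    have hre : |w.re - z.re| ≤ 1 := by
      have h1 : |w.re - z.re| ≤ ‖w - z‖ := by
        simpa [Complex.sub_re] using Complex.abs_re_le_norm (w - z)
      linarith
    rw [norm_mul, norm_mul, norm_pow, Complex.norm_real, Real.norm_eq_abs,
      norm_K τ hτ0 w x]
    have hR0 : (0:ℝ) ≤ R := by rw [hR]; positivity
    have hwn : ‖w‖ ≤ R := by
      calc ‖w‖ = ‖z + (w - z)‖ := by ring_nf
        _ ≤ ‖z‖ + ‖w - z‖ := norm_add_le _ _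
        _ ≤ R := by rw [hR]; linarith
    have e1 : ‖((x:ℂ) - w) / (τ:ℂ)‖ ≤ (|x| + R) / τ := by
      rw [norm_div, Complex.norm_real, Real.norm_eq_abs, abs_of_pos hτ0]
      gcongr
      calc ‖(x:ℂ) - w‖ ≤ ‖(x:ℂ)‖ + ‖w‖ := norm_sub_le _ _
        _ ≤ |x| + R := by rw [Complex.norm_real, Real.norm_eq_abs]; linarith
    have him2 : w.im ^ 2 ≤ R ^ 2 := by nlinarith [sq_abs w.im, him, abs_nonneg w.im]
    have b1 : Real.exp (w.im ^ 2 / (2 * τ)) ≤ Real.exp (R ^ 2 / (2 * τ)) := by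
      apply Real.exp_le_exp.mpr
      gcongr
    have hre2 : (w.re - z.re) ^ 2 ≤ 1 := by
      nlinarith [sq_abs (w.re - z.re), hre, abs_nonneg (w.re - z.re)]
    have hnum : -(2 * (x - w.re) ^ 2) - 2 + (x - z.re) ^ 2 ≤ 0 := by
      nlinarith [sq_nonneg ((x - w.re) - (w.re - z.re)), hre2]
    have hexp : -(x - w.re) ^ 2 / (2 * τ) ≤ 1 / (2 * τ) + -(x - z.re) ^ 2 / (4 * τ) := by
      rw [← sub_nonpos, show -(x - w.re) ^ 2 / (2 * τ) - (1 / (2 * τ) + -(x - z.re) ^ 2 / (4 * τ))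
          = (-(2 * (x - w.re) ^ 2) - 2 + (x - z.re) ^ 2) / (4 * τ) from by field_simp; ring]
      exact div_nonpos_of_nonpos_of_nonneg hnum (by positivity)
    have b2 : Real.exp (-(x - w.re) ^ 2 / (2 * τ))
        ≤ Real.exp (1 / (2 * τ)) * Real.exp (-(x - z.re) ^ 2 / (4 * τ)) := by
      rw [← Real.exp_add]
      exact Real.exp_le_exp.mpr hexp
    have hpoly : (|x| + R) * |x| ^ n
        ≤ D * Real.exp (R ^ 2 / (16 * τ)) * Real.exp ((1 / (16 * τ)) * x ^ 2) := by
      have hD0 : (0:ℝ) ≤ D := by rw [hD]; positivity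
      have step1 : (|x| + R) * |x| ^ n ≤ (|x| + R) ^ (n + 1) := by
        calc (|x| + R) * |x| ^ n ≤ (|x| + R) * (|x| + R) ^ n := by
              have h1 : |x| ≤ |x| + R := by linarith
              have h2 : (0:ℝ) ≤ |x| := abs_nonneg x
              gcongr
          _ = (|x| + R) ^ (n + 1) := (pow_succ' _ _).symm
      have step2 := abs_pow_le hs0 (n + 1) (|x| + R) (by positivity)
      have step3 : s ^ 2 * (|x| + R) ^ 2 / (2 * Real.exp 1)
          ≤ R ^ 2 / (16 * τ) + (1 / (16 * τ)) * x ^ 2 := by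
        rw [hs2, show Real.exp 1 / (16 * τ) * (|x| + R) ^ 2 / (2 * Real.exp 1)
            = (|x| + R) ^ 2 / (32 * τ) from by
          field_simp; ring]
        calc (|x| + R) ^ 2 / (32 * τ) ≤ (2 * x ^ 2 + 2 * R ^ 2) / (32 * τ) := by
              gcongr
              nlinarith [sq_abs x, sq_nonneg (|x| - R)]
          _ = R ^ 2 / (16 * τ) + (1 / (16 * τ)) * x ^ 2 := by ring
      calc (|x| + R) * |x| ^ n ≤ (|x| + R) ^ (n + 1) := step1
        _ ≤ ((n + 1 : ℕ) : ℝ) ^ (((n + 1 : ℕ) : ℝ) / 2) / s ^ (n + 1)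
            * Real.exp (s ^ 2 * (|x| + R) ^ 2 / (2 * Real.exp 1)) := step2
        _ ≤ D * Real.exp (R ^ 2 / (16 * τ) + (1 / (16 * τ)) * x ^ 2) := by
            rw [hD]
            push_cast
            gcongr
            all_goals exact Real.exp_le_exp.mpr step3
        _ = D * Real.exp (R ^ 2 / (16 * τ)) * Real.exp ((1 / (16 * τ)) * x ^ 2) := by
            rw [Real.exp_add]; ring
    calc ‖((x:ℂ) - w) / (τ:ℂ)‖
          * (Real.exp (w.im ^ 2 / (2 * τ)) * Real.exp (-(x - w.re) ^ 2 / (2 * τ)) * |x| ^ n)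
        ≤ ((|x| + R) / τ) * (Real.exp (R ^ 2 / (2 * τ))
            * (Real.exp (1 / (2 * τ)) * Real.exp (-(x - z.re) ^ 2 / (4 * τ))) * |x| ^ n) := by
          gcongr
      _ = (1 / τ) * Real.exp (R ^ 2 / (2 * τ)) * Real.exp (1 / (2 * τ))
            * Real.exp (-(x - z.re) ^ 2 / (4 * τ)) * ((|x| + R) * |x| ^ n) := by ring
      _ ≤ (1 / τ) * Real.exp (R ^ 2 / (2 * τ)) * Real.exp (1 / (2 * τ))
            * Real.exp (-(x - z.re) ^ 2 / (4 * τ))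
            * (D * Real.exp (R ^ 2 / (16 * τ)) * Real.exp ((1 / (16 * τ)) * x ^ 2)) := by
          gcongr
      _ = Cb * (Real.exp (-(x - z.re) ^ 2 / (4 * τ)) * Real.exp ((1 / (16 * τ)) * x ^ 2)) := by
          rw [hCb, show (R ^ 2 + 1) / (2 * τ) = R ^ 2 / (2 * τ) + 1 / (2 * τ) from by ring,
            Real.exp_add]
          ring
  · -- differentiability
    filter_upwards with x
    intro w hw
    have h1 : HasDerivAt (fun w : ℂ => -(w - (x:ℂ)) ^ 2 / (2 * (τ:ℂ)))
        (-(2 * (w - (x:ℂ)) ^ 1 * 1) / (2 * (τ:ℂ))) w :=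
      ((((hasDerivAt_id w).sub_const ((x:ℂ))).pow 2).neg).div_const _
    have h2 := (h1.cexp).mul_const ((x:ℂ) ^ n)
    convert h2 using 1
    · rfl
    have hτ : ((τ:ℂ)) ≠ 0 := Complex.ofReal_ne_zero.mpr (ne_of_gt hτ0)
    field_simp
    ring


private lemma heatTerm_zero (τ z : ℂ) : heatTerm τ z 0 = 1 := by
  rw [heatTerm_eq]
  simp [htC_zero]

private lemma In_eq (τ : ℝ) (hτ0 : 0 < τ) (n : ℕ) :
    ∀ z : ℂ, ∫ x : ℝ, Complex.exp (-(z - (x:ℂ)) ^ 2 / (2 * (τ:ℂ))) * (x:ℂ) ^ n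
      = (Real.sqrt (2 * Real.pi * τ) : ℂ) * heatTerm (-(τ:ℂ)) z n := by
  have hτC : ((τ:ℂ)) ≠ 0 := Complex.ofReal_ne_zero.mpr (ne_of_gt hτ0)
  induction n with
  | zero =>
    intro z
    have hb : ((-(1 / (2 * τ)) : ℝ) : ℂ).re < 0 := by
      rw [Complex.ofReal_re]
      exact neg_lt_zero.mpr (by positivity)
    have heq : (fun x : ℝ => Complex.exp (-(z - (x:ℂ)) ^ 2 / (2 * (τ:ℂ))) * (x:ℂ) ^ 0)
        = fun x : ℝ => Complex.exp (((-(1 / (2 * τ)) : ℝ) : ℂ) * (x:ℂ) ^ 2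
            + (z / (τ:ℂ)) * (x:ℂ) + (-(z ^ 2) / (2 * (τ:ℂ)))) := by
      funext x
      rw [pow_zero, mul_one]
      congr 1
      push_cast
      field_simp
      ring
    rw [heq, integral_cexp_quadratic hb]
    have h1 : -(z ^ 2) / (2 * (τ:ℂ)) - (z / (τ:ℂ)) ^ 2 / (4 * ((-(1 / (2 * τ)) : ℝ) : ℂ)) = 0 := by
      push_cast
      field_simp
      ring
    rw [h1, Complex.exp_zero, mul_one, heatTerm_zero, mul_one]
    have h2 : ((Real.pi : ℂ)) / -((-(1 / (2 * τ)) : ℝ) : ℂ) = (((2 * Real.pi * τ : ℝ)) : ℂ) := by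
      push_cast
      field_simp
    rw [h2]
    rw [show ((1 / 2 : ℂ)) = (((1 / 2 : ℝ)) : ℂ) by norm_num,
      ← Complex.ofReal_cpow (by positivity) (1 / 2 : ℝ),
      show (2 * Real.pi * τ) ^ (1 / 2 : ℝ) = Real.sqrt (2 * Real.pi * τ) from
        (Real.sqrt_eq_rpow _).symm]
  | succ n ih =>
    intro z
    have hd := hasDerivAt_In τ hτ0 n z
    have hfun : (fun w : ℂ => ∫ x : ℝ, Complex.exp (-(w - (x:ℂ)) ^ 2 / (2 * (τ:ℂ))) * (x:ℂ) ^ n)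
        = fun w : ℂ => (Real.sqrt (2 * Real.pi * τ) : ℂ) * heatTerm (-(τ:ℂ)) w n :=
      funext ih
    rw [hfun] at hd
    have hd2 : HasDerivAt (fun w : ℂ => (Real.sqrt (2 * Real.pi * τ) : ℂ)
          * heatTerm (-(τ:ℂ)) w n)
        ((Real.sqrt (2 * Real.pi * τ) : ℂ) * heatTermD (-(τ:ℂ)) z n) z :=
      (hasDerivAt_heatTerm (-(τ:ℂ)) z n).const_mul _
    have hDval : (∫ x : ℝ, (((x:ℂ) - z) / (τ:ℂ))
          * (Complex.exp (-(z - (x:ℂ)) ^ 2 / (2 * (τ:ℂ))) * (x:ℂ) ^ n))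
        = (Real.sqrt (2 * Real.pi * τ) : ℂ) * heatTermD (-(τ:ℂ)) z n := hd.unique hd2
    have hint1 := integrable_K_pow τ hτ0 z (n + 1)
    have hint0 := integrable_K_pow τ hτ0 z n
    have hsplit : (∫ x : ℝ, (((x:ℂ) - z) / (τ:ℂ))
          * (Complex.exp (-(z - (x:ℂ)) ^ 2 / (2 * (τ:ℂ))) * (x:ℂ) ^ n))
        = (1 / (τ:ℂ)) * (∫ x : ℝ, Complex.exp (-(z - (x:ℂ)) ^ 2 / (2 * (τ:ℂ))) * (x:ℂ) ^ (n + 1))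
          - (z / (τ:ℂ)) * ∫ x : ℝ, Complex.exp (-(z - (x:ℂ)) ^ 2 / (2 * (τ:ℂ))) * (x:ℂ) ^ n := by
      rw [← integral_const_mul, ← integral_const_mul, ← integral_sub
        (hint1.const_mul _) (hint0.const_mul _)]
      congr 1
      funext x
      field_simp
      ring
    rw [hsplit] at hDval
    have hfin : (∫ x : ℝ, Complex.exp (-(z - (x:ℂ)) ^ 2 / (2 * (τ:ℂ))) * (x:ℂ) ^ (n + 1))
        = z * (∫ x : ℝ, Complex.exp (-(z - (x:ℂ)) ^ 2 / (2 * (τ:ℂ))) * (x:ℂ) ^ n)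
          + (τ:ℂ) * ((Real.sqrt (2 * Real.pi * τ) : ℂ) * heatTermD (-(τ:ℂ)) z n) := by
      rw [← hDval]
      field_simp
      try ring
    rw [hfin, ih z, heatTerm_succ]
    ring


/-- for real `0 < τ` with `τ L² < e`, the Gaussian convolution integral over the
real line converges absolutely and equals the heat flow of `F` with parameter `-τ`. -/
theorem heat_flow_as_real_convolution (F : ℂ → ℂ) (hF : Differentiable ℂ F)
    (hL : Filter.IsBoundedUnder (· ≤ ·) Filter.atTop (coefGrowthSeq F))
    (τ : ℝ) (hτ0 : 0 < τ) (hτ : τ * Lgrowth F ^ 2 < Real.exp 1) :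
    ∀ z : ℂ,
      Integrable (fun x : ℝ => Complex.exp (-(z - (x : ℂ)) ^ 2 / (2 * (τ : ℂ))) * F x) ∧
      ((Real.sqrt (2 * Real.pi * τ) : ℂ))⁻¹ *
          ∫ x : ℝ, Complex.exp (-(z - (x : ℂ)) ^ 2 / (2 * (τ : ℂ))) * F x
        = heatFlow F (-(τ : ℂ)) z := by
  have hFsum : ∀ w : ℂ, HasSum (fun n => taylorCoeff F n * w ^ n) (F w) := by
    intro w
    have h := Complex.hasSum_taylorSeries_of_entire hF 0 w
    simp only [sub_zero, smul_eq_mul] at h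
    have heq : (fun n : ℕ => taylorCoeff F n * w ^ n)
        = fun n : ℕ => ((n.factorial : ℂ))⁻¹ * (w ^ n * iteratedDeriv n F 0) := by
      funext n
      rw [taylorCoeff]
      ring
    rw [heq]
    exact h
  have hL0 : 0 ≤ Lgrowth F :=
    Filter.le_limsup_of_frequently_le
      ((Eventually.of_forall (fun n => by unfold coefGrowthSeq; positivity)).frequently) hL
  have hLe : Lgrowth F ^ 2 < Real.exp 1 / τ := by
    rw [lt_div_iff₀ hτ0]; linarith
  set L := Lgrowth F with hLdef
  set ε : ℝ := min 1 ((Real.exp 1 / τ - L ^ 2) / (2 * L + 2)) with hεdef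
  have hε0 : 0 < ε := lt_min one_pos (div_pos (by linarith) (by linarith))
  set M : ℝ := L + ε with hMdef
  have hM0 : 0 < M := by rw [hMdef]; linarith
  have hM : M ^ 2 < Real.exp 1 / τ := by
    have h1 : ε ≤ 1 := min_le_left _ _
    have h2 : ε * (2 * L + 2) ≤ Real.exp 1 / τ - L ^ 2 :=
      (le_div_iff₀ (by linarith)).mp (min_le_right _ _)
    rw [hMdef]
    nlinarith [hε0, hL0, h1, h2]
  -- eventual bound
  have hev : ∀ᶠ n in Filter.atTop, coefGrowthSeq F n < M := by
    apply Filter.eventually_lt_of_limsup_lt ?_ hL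
    rw [show Filter.limsup (coefGrowthSeq F) Filter.atTop = L from rfl]
    rw [hMdef]; linarith
  obtain ⟨N0, hN0⟩ := Filter.eventually_atTop.mp hev
  set N : ℕ := max N0 1 with hNdef
  have htail : ∀ n, N ≤ n → ‖taylorCoeff F n‖ * (n:ℝ) ^ ((n:ℝ) / 2) ≤ M ^ n := by
    intro n hn
    have hn1 : 1 ≤ n := le_trans (le_max_right _ _) hn
    have hn0 : (0:ℝ) < n := by exact_mod_cast hn1
    have h := hN0 n (le_trans (le_max_left _ _) hn)
    unfold coefGrowthSeq at h
    have hsq : 0 < Real.sqrt n := Real.sqrt_pos.mpr hn0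
    have h1 : ‖taylorCoeff F n‖ ^ ((n:ℝ)⁻¹) ≤ M / Real.sqrt n := by
      rw [le_div_iff₀ hsq, mul_comm]
      exact le_of_lt h
    have h2 : ‖taylorCoeff F n‖ ≤ (M / Real.sqrt n) ^ n := by
      have hrw : ‖taylorCoeff F n‖
          = (‖taylorCoeff F n‖ ^ ((n:ℝ)⁻¹)) ^ n := by
        rw [← Real.rpow_natCast (‖taylorCoeff F n‖ ^ ((n:ℝ)⁻¹)) n,
          ← Real.rpow_mul (norm_nonneg _), inv_mul_cancel₀ (ne_of_gt hn0),
          Real.rpow_one]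
      rw [hrw]
      exact pow_le_pow_left₀ (by positivity) h1 n
    have h3 : Real.sqrt n ^ n = (n:ℝ) ^ ((n:ℝ) / 2) := by
      rw [Real.sqrt_eq_rpow, ← Real.rpow_natCast ((n:ℝ) ^ (1/2 : ℝ)) n,
        ← Real.rpow_mul hn0.le, show (1/2 : ℝ) * n = (n:ℝ)/2 by ring]
    calc ‖taylorCoeff F n‖ * (n:ℝ) ^ ((n:ℝ)/2)
        ≤ (M / Real.sqrt n) ^ n * (n:ℝ) ^ ((n:ℝ)/2) := by
          have hnn : (0:ℝ) ≤ (n:ℝ) ^ ((n:ℝ)/2) := by positivity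
          exact mul_le_mul_of_nonneg_right h2 hnn
      _ = (M / Real.sqrt n) ^ n * Real.sqrt n ^ n := by rw [h3]
      _ = M ^ n := by rw [← mul_pow, div_mul_cancel₀ M (ne_of_gt hsq)]
  set B : ℝ := 1 + ∑ n ∈ Finset.range (N + 1),
      ‖taylorCoeff F n‖ * (n:ℝ) ^ ((n:ℝ)/2) / M ^ n with hBdef
  have hB1 : 1 ≤ B := by
    rw [hBdef]
    have : (0:ℝ) ≤ ∑ n ∈ Finset.range (N + 1),
        ‖taylorCoeff F n‖ * (n:ℝ) ^ ((n:ℝ)/2) / M ^ n :=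
      Finset.sum_nonneg (fun i _ => by positivity)
    linarith
  have hB0 : 0 < B := lt_of_lt_of_le one_pos hB1
  have hcoef : ∀ n, ‖taylorCoeff F n‖ * (n:ℝ) ^ ((n:ℝ)/2) ≤ B * M ^ n := by
    intro n
    rcases le_or_gt N n with h | h
    · calc ‖taylorCoeff F n‖ * (n:ℝ) ^ ((n:ℝ)/2) ≤ M ^ n := htail n h
        _ ≤ B * M ^ n := le_mul_of_one_le_left (by positivity) hB1
    · have hmem : n ∈ Finset.range (N + 1) := Finset.mem_range.mpr (by omega)
      have hle : ‖taylorCoeff F n‖ * (n:ℝ) ^ ((n:ℝ)/2) / M ^ n ≤ B := by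
        rw [hBdef]
        have := Finset.single_le_sum
          (f := fun i => ‖taylorCoeff F i‖ * (i:ℝ) ^ ((i:ℝ)/2) / M ^ i)
          (fun i _ => by positivity) hmem
        linarith
      calc ‖taylorCoeff F n‖ * (n:ℝ) ^ ((n:ℝ)/2)
          = (‖taylorCoeff F n‖ * (n:ℝ) ^ ((n:ℝ)/2) / M ^ n) * M ^ n := by
            field_simp
        _ ≤ B * M ^ n := mul_le_mul_of_nonneg_right hle (by positivity)
  -- choose s, α, ρ
  have hMe : M < Real.sqrt (Real.exp 1 / τ) := (Real.lt_sqrt hM0.le).mpr hM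
  set s : ℝ := (M + Real.sqrt (Real.exp 1 / τ)) / 2 with hsdef
  have hs0 : 0 < s := by rw [hsdef]; positivity
  have hMs : M < s := by rw [hsdef]; linarith
  have hssq : s ^ 2 < Real.exp 1 / τ := by
    apply (Real.lt_sqrt hs0.le).mp
    rw [hsdef]; linarith
  set α : ℝ := s ^ 2 / (2 * Real.exp 1) with hαdef
  have hα2 : α < 1 / (2 * τ) := by
    rw [hαdef, div_lt_div_iff₀ (by positivity) (by positivity)]
    rw [lt_div_iff₀ hτ0] at hssq
    nlinarith [hssq]
  set ρ : ℝ := M / s with hρdef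
  have hρ0 : 0 ≤ ρ := by rw [hρdef]; positivity
  have hρ1 : ρ < 1 := by rw [hρdef]; exact (div_lt_one hs0).mpr hMs
  have h1ρ : 0 < 1 - ρ := by linarith
  have hmaster : ∀ (n : ℕ) (x : ℝ),
      ‖taylorCoeff F n‖ * |x| ^ n ≤ B * ρ ^ n * Real.exp (α * x ^ 2) := by
    intro n x
    have h1 := abs_pow_le hs0 n |x| (abs_nonneg x)
    have he : s ^ 2 * |x| ^ 2 / (2 * Real.exp 1) = α * x ^ 2 := by
      rw [hαdef, sq_abs]; ring
    rw [he] at h1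
    calc ‖taylorCoeff F n‖ * |x| ^ n
        ≤ ‖taylorCoeff F n‖ * ((n:ℝ) ^ ((n:ℝ)/2) / s ^ n * Real.exp (α * x ^ 2)) :=
          mul_le_mul_of_nonneg_left h1 (norm_nonneg _)
      _ = (‖taylorCoeff F n‖ * (n:ℝ) ^ ((n:ℝ)/2)) * (Real.exp (α * x ^ 2) / s ^ n) := by
          ring
      _ ≤ (B * M ^ n) * (Real.exp (α * x ^ 2) / s ^ n) :=
          mul_le_mul_of_nonneg_right (hcoef n) (by positivity)
      _ = B * ρ ^ n * Real.exp (α * x ^ 2) := by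
          rw [hρdef]
          conv_rhs => rw [div_pow]
          ring
  intro z
  have hg0 : Integrable (fun x : ℝ => Real.exp (-(x - z.re) ^ 2 / (2 * τ)) * Real.exp (α * x ^ 2)) :=
    integrable_gauss_prod τ z.re α hτ0 hα2
  set CK : ℝ := Real.exp (z.im ^ 2 / (2 * τ)) with hCKdef
  have hCK0 : 0 < CK := Real.exp_pos _
  have hfn_bound : ∀ (n : ℕ) (x : ℝ),
      ‖Complex.exp (-(z - (x:ℂ)) ^ 2 / (2 * (τ:ℂ))) * (taylorCoeff F n * (x:ℂ) ^ n)‖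
      ≤ (CK * B * ρ ^ n) * (Real.exp (-(x - z.re) ^ 2 / (2 * τ)) * Real.exp (α * x ^ 2)) := by
    intro n x
    rw [norm_mul, norm_mul, norm_pow, Complex.norm_real, Real.norm_eq_abs, norm_K τ hτ0 z x]
    calc (CK * Real.exp (-(x - z.re) ^ 2 / (2 * τ))) * (‖taylorCoeff F n‖ * |x| ^ n)
        ≤ (CK * Real.exp (-(x - z.re) ^ 2 / (2 * τ))) * (B * ρ ^ n * Real.exp (α * x ^ 2)) := by
          apply mul_le_mul_of_nonneg_left ?_ (by positivity)
          exact hmaster n x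
      _ = (CK * B * ρ ^ n) * (Real.exp (-(x - z.re) ^ 2 / (2 * τ)) * Real.exp (α * x ^ 2)) := by
          ring
  have hfn_int : ∀ n : ℕ, Integrable
      (fun x : ℝ => Complex.exp (-(z - (x:ℂ)) ^ 2 / (2 * (τ:ℂ))) * (taylorCoeff F n * (x:ℂ) ^ n)) := by
    intro n
    refine (hg0.const_mul (CK * B * ρ ^ n)).mono'
      (Continuous.aestronglyMeasurable (by fun_prop)) ?_
    filter_upwards with x using hfn_bound n x
  have hnormint : ∀ n : ℕ,
      (∫ x : ℝ, ‖Complex.exp (-(z - (x:ℂ)) ^ 2 / (2 * (τ:ℂ))) * (taylorCoeff F n * (x:ℂ) ^ n)‖)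
      ≤ (CK * B * (∫ x : ℝ, Real.exp (-(x - z.re) ^ 2 / (2 * τ)) * Real.exp (α * x ^ 2))) * ρ ^ n := by
    intro n
    have := integral_mono ((hfn_int n).norm) (hg0.const_mul (CK * B * ρ ^ n))
      (fun x => hfn_bound n x)
    rw [integral_const_mul] at this
    calc (∫ x : ℝ, ‖Complex.exp (-(z - (x:ℂ)) ^ 2 / (2 * (τ:ℂ))) * (taylorCoeff F n * (x:ℂ) ^ n)‖)
        ≤ (CK * B * ρ ^ n) * ∫ x : ℝ, Real.exp (-(x - z.re) ^ 2 / (2 * τ)) * Real.exp (α * x ^ 2) :=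
          this
      _ = (CK * B * (∫ x : ℝ, Real.exp (-(x - z.re) ^ 2 / (2 * τ)) * Real.exp (α * x ^ 2))) * ρ ^ n := by
          ring
  have hsum : Summable (fun n : ℕ =>
      ∫ x : ℝ, ‖Complex.exp (-(z - (x:ℂ)) ^ 2 / (2 * (τ:ℂ))) * (taylorCoeff F n * (x:ℂ) ^ n)‖) := by
    apply Summable.of_nonneg_of_le (fun n => integral_nonneg (fun x => norm_nonneg _))
      (fun n => hnormint n)
    exact (summable_geometric_of_lt_one hρ0 hρ1).mul_left _
  have hFbound : ∀ x : ℝ, ‖F (x:ℂ)‖ ≤ B / (1 - ρ) * Real.exp (α * x ^ 2) := by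
    intro x
    have hsummand : ∀ n : ℕ, ‖taylorCoeff F n * (x:ℂ) ^ n‖ ≤ B * Real.exp (α * x ^ 2) * ρ ^ n := by
      intro n
      rw [norm_mul, norm_pow, Complex.norm_real, Real.norm_eq_abs]
      calc ‖taylorCoeff F n‖ * |x| ^ n ≤ B * ρ ^ n * Real.exp (α * x ^ 2) :=
            hmaster n x
        _ = B * Real.exp (α * x ^ 2) * ρ ^ n := by ring
    have hsum2 : Summable (fun n : ℕ => ‖taylorCoeff F n * (x:ℂ) ^ n‖) :=
      Summable.of_nonneg_of_le (fun _ => norm_nonneg _) hsummand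
        ((summable_geometric_of_lt_one hρ0 hρ1).mul_left _)
    rw [← (hFsum (x:ℂ)).tsum_eq]
    calc ‖∑' n : ℕ, taylorCoeff F n * (x:ℂ) ^ n‖
        ≤ ∑' n : ℕ, ‖taylorCoeff F n * (x:ℂ) ^ n‖ := norm_tsum_le_tsum_norm hsum2
      _ ≤ ∑' n : ℕ, B * Real.exp (α * x ^ 2) * ρ ^ n :=
          Summable.tsum_le_tsum hsummand hsum2 ((summable_geometric_of_lt_one hρ0 hρ1).mul_left _)
      _ = B * Real.exp (α * x ^ 2) * ∑' n : ℕ, ρ ^ n := tsum_mul_left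
      _ = B / (1 - ρ) * Real.exp (α * x ^ 2) := by
          rw [tsum_geometric_of_lt_one hρ0 hρ1]
          field_simp
          try ring
  have hKF_int : Integrable (fun x : ℝ => Complex.exp (-(z - (x:ℂ)) ^ 2 / (2 * (τ:ℂ))) * F (x:ℂ)) := by
    refine (hg0.const_mul (CK * (B / (1 - ρ)))).mono'
      (Continuous.aestronglyMeasurable ?_) ?_
    · exact (Complex.continuous_exp.comp (by fun_prop)).mul
        (hF.continuous.comp Complex.continuous_ofReal)
    · filter_upwards with x
      rw [norm_mul, norm_K τ hτ0 z x]
      calc (CK * Real.exp (-(x - z.re) ^ 2 / (2 * τ))) * ‖F (x:ℂ)‖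
          ≤ (CK * Real.exp (-(x - z.re) ^ 2 / (2 * τ))) * (B / (1 - ρ) * Real.exp (α * x ^ 2)) :=
            mul_le_mul_of_nonneg_left (hFbound x) (by positivity)
        _ = (CK * (B / (1 - ρ))) * (Real.exp (-(x - z.re) ^ 2 / (2 * τ)) * Real.exp (α * x ^ 2)) := by
            ring
  refine ⟨hKF_int, ?_⟩
  have hswap := MeasureTheory.integral_tsum_of_summable_integral_norm hfn_int hsum
  have hpt : ∀ x : ℝ,
      (∑' n : ℕ, Complex.exp (-(z - (x:ℂ)) ^ 2 / (2 * (τ:ℂ))) * (taylorCoeff F n * (x:ℂ) ^ n))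
      = Complex.exp (-(z - (x:ℂ)) ^ 2 / (2 * (τ:ℂ))) * F (x:ℂ) := by
    intro x
    rw [tsum_mul_left, (hFsum (x:ℂ)).tsum_eq]
  have heval : ∀ n : ℕ,
      (∫ x : ℝ, Complex.exp (-(z - (x:ℂ)) ^ 2 / (2 * (τ:ℂ))) * (taylorCoeff F n * (x:ℂ) ^ n))
      = taylorCoeff F n * ((Real.sqrt (2 * Real.pi * τ) : ℂ) * heatTerm (-(τ:ℂ)) z n) := by
    intro n
    rw [show (fun x : ℝ => Complex.exp (-(z - (x:ℂ)) ^ 2 / (2 * (τ:ℂ))) * (taylorCoeff F n * (x:ℂ) ^ n))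
        = fun x : ℝ => taylorCoeff F n * (Complex.exp (-(z - (x:ℂ)) ^ 2 / (2 * (τ:ℂ))) * (x:ℂ) ^ n)
        from funext fun x => by ring]
    rw [integral_const_mul, In_eq τ hτ0 n z]
  have hInt : (∫ x : ℝ, Complex.exp (-(z - (x:ℂ)) ^ 2 / (2 * (τ:ℂ))) * F (x:ℂ))
      = (Real.sqrt (2 * Real.pi * τ) : ℂ) * heatFlow F (-(τ:ℂ)) z := by
    have h1 : (∫ x : ℝ, Complex.exp (-(z - (x:ℂ)) ^ 2 / (2 * (τ:ℂ))) * F (x:ℂ))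
        = ∫ x : ℝ, (∑' n : ℕ, Complex.exp (-(z - (x:ℂ)) ^ 2 / (2 * (τ:ℂ)))
            * (taylorCoeff F n * (x:ℂ) ^ n)) := by
      congr 1
      funext x
      exact (hpt x).symm
    rw [h1, ← hswap]
    calc (∑' n : ℕ, ∫ x : ℝ, Complex.exp (-(z - (x:ℂ)) ^ 2 / (2 * (τ:ℂ)))
            * (taylorCoeff F n * (x:ℂ) ^ n))
        = ∑' n : ℕ, taylorCoeff F n * ((Real.sqrt (2 * Real.pi * τ) : ℂ) * heatTerm (-(τ:ℂ)) z n) :=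
          tsum_congr heval
      _ = ∑' n : ℕ, (Real.sqrt (2 * Real.pi * τ) : ℂ) * (taylorCoeff F n * heatTerm (-(τ:ℂ)) z n) :=
          tsum_congr (fun n => by ring)
      _ = (Real.sqrt (2 * Real.pi * τ) : ℂ) * ∑' n : ℕ, taylorCoeff F n * heatTerm (-(τ:ℂ)) z n :=
          tsum_mul_left
      _ = (Real.sqrt (2 * Real.pi * τ) : ℂ) * heatFlow F (-(τ:ℂ)) z := rfl
  rw [hInt, inv_mul_cancel_left₀ (Complex.ofReal_ne_zero.mpr
    (ne_of_gt (Real.sqrt_pos.mpr (by positivity))))]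

end
end

section
/- Let F(z) = ∑_{n=0}^∞ a_n z^n be an entire function with L := limsup_{n→∞} √n·|a_n|^{1/n} < ∞, let τ ∈ ℂ satisfy |τ|·L² < e, and let a ∈ ℂ. Then the heat flow commutes with translation: for every z ∈ ℂ, (e^{−τD²/2}[w ↦ F(a+w)])(z) = (e^{−τD²/2}F)(a+z). (The translated function w ↦ F(a+w) satisfies the same growth condition, so its heat flow is defined.) -/
open Filter MeasureTheory Metric Set

noncomputable section

/-! ### Auxiliary lemmas -/

private lemma exp_le_pow_succ (n : ℕ) (hn : 1 ≤ n) :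
    Real.exp 1 * (n : ℝ) ^ (n + 1) ≤ ((n : ℝ) + 1) ^ (n + 1) := by
  have hn0 : (0 : ℝ) < n := by exact_mod_cast hn
  have hpos : (0 : ℝ) < (n : ℝ) + 1 := by positivity
  have h3 : (0 : ℝ) < Real.exp (1 / ((n : ℝ) + 1)) := Real.exp_pos _
  have h1 : Real.exp ((1 : ℝ) / ((n : ℝ) + 1)) ≤ ((n : ℝ) + 1) / n := by
    have h2 := Real.add_one_le_exp (-(1 / ((n : ℝ) + 1)))
    rw [Real.exp_neg] at h2
    have h5 : Real.exp (1 / ((n:ℝ)+1)) * ((n:ℝ)/((n:ℝ)+1)) ≤ 1 := by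
      have heq : (n:ℝ)/((n:ℝ)+1) = -(1/((n:ℝ)+1)) + 1 := by field_simp; ring
      rw [heq]
      calc Real.exp (1/((n:ℝ)+1)) * (-(1/((n:ℝ)+1)) + 1)
          ≤ Real.exp (1/((n:ℝ)+1)) * (Real.exp (1/((n:ℝ)+1)))⁻¹ :=
            mul_le_mul_of_nonneg_left h2 h3.le
        _ = 1 := mul_inv_cancel₀ h3.ne'
    rw [le_div_iff₀ hn0]
    have h6 := mul_le_mul_of_nonneg_right h5 hpos.le
    have h7 : Real.exp (1/((n:ℝ)+1)) * ((n:ℝ)/((n:ℝ)+1)) * ((n:ℝ)+1)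
        = Real.exp (1/((n:ℝ)+1)) * (n:ℝ) := by field_simp
    rw [h7, one_mul] at h6
    exact h6
  have h4 : Real.exp ((1:ℝ)/((n:ℝ)+1)) ^ (n+1) = Real.exp 1 := by
    rw [← Real.exp_nat_mul]
    congr 1
    push_cast
    field_simp
  calc Real.exp 1 * (n:ℝ)^(n+1) = (Real.exp ((1:ℝ)/((n:ℝ)+1)) * n) ^ (n+1) := by
        rw [mul_pow, h4]
    _ ≤ (((n:ℝ)+1)/n * n) ^ (n+1) := by
        apply pow_le_pow_left₀ (by positivity)
        exact mul_le_mul_of_nonneg_right h1 hn0.le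
    _ = ((n:ℝ)+1)^(n+1) := by rw [div_mul_cancel₀]; exact hn0.ne'

private lemma factorial_le_stirling (n : ℕ) (hn : 1 ≤ n) :
    (n.factorial : ℝ) ≤ Real.exp 1 * n * ((n : ℝ) / Real.exp 1) ^ n := by
  induction n with
  | zero => omega
  | succ n ih =>
    have he := Real.exp_pos 1
    rcases Nat.eq_or_lt_of_le hn with h | h
    · have h0 : n = 0 := by omega
      subst h0
      norm_num [Nat.factorial]
    · have hn1 : 1 ≤ n := by omega
      have ihn := ih hn1
      have hn0 : (0 : ℝ) < n := by exact_mod_cast hn1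
      have key := exp_le_pow_succ n hn1
      have hfe : ((n+1).factorial : ℝ) = ((n:ℝ)+1) * n.factorial := by
        rw [Nat.factorial_succ]; push_cast; ring
      rw [hfe]
      have main : ((n:ℝ)+1) * (Real.exp 1 * n * ((n:ℝ)/Real.exp 1)^n)
          ≤ Real.exp 1 * ((n:ℝ)+1) * (((n:ℝ)+1)/Real.exp 1)^(n+1) := by
        rw [div_pow, div_pow, ← sub_nonneg]
        have gen : ∀ E x : ℝ, 0 < E → E * (x+1) * ((x+1)^(n+1)/E^(n+1)) -
            (x+1) * (E * x * (x^n/E^n)) =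
            ((x+1) / E ^ n) * ((x+1)^(n+1) - E * x^(n+1)) := by
          intro E x hE
          field_simp
          ring
        have expand := gen (Real.exp 1) (n:ℝ) he
        rw [expand]
        apply mul_nonneg (by positivity) (by linarith)
      calc ((n:ℝ)+1) * (n.factorial : ℝ)
          ≤ ((n:ℝ)+1) * (Real.exp 1 * n * ((n:ℝ)/Real.exp 1)^n) :=
            mul_le_mul_of_nonneg_left ihn (by positivity)
        _ ≤ Real.exp 1 * ((n:ℝ)+1) * (((n:ℝ)+1)/Real.exp 1)^(n+1) := main
        _ = Real.exp 1 * ((n+1:ℕ):ℝ) * (((n+1:ℕ):ℝ)/Real.exp 1)^(n+1) := by push_cast; ring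

private lemma pow_div_factorial_le_exp {x : ℝ} (hx : 0 ≤ x) (k : ℕ) :
    x ^ k / k.factorial ≤ Real.exp x := by
  calc x ^ k / k.factorial ≤ ∑ i ∈ Finset.range (k+1), x ^ i / i.factorial := by
        apply Finset.single_le_sum (f := fun i => x ^ i / (i.factorial : ℝ))
          (fun i _ => by positivity) (Finset.self_mem_range_succ k)
    _ ≤ Real.exp x := Real.sum_le_exp_of_nonneg hx _

private lemma aux_fact {r : ℝ} (hr : 0 < r) {x : ℝ} (hx : 0 ≤ x) (j : ℕ) :
    x ^ j / (j.factorial : ℝ) ≤ Real.exp (r * x) / r ^ j := by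
  rw [div_le_div_iff₀ (by positivity) (by positivity)]
  have h1 := pow_div_factorial_le_exp (x := r*x) (by positivity) j
  rw [div_le_iff₀ (by positivity)] at h1
  calc x ^ j * r ^ j = (r*x) ^ j := by rw [mul_pow]; ring
    _ ≤ Real.exp (r*x) * j.factorial := h1

set_option maxHeartbeats 1000000 in
private lemma core_bound {C T A Z : ℝ} (hC : 0 < C) (hT : 0 < T)
    (hq : C ^ 2 * T < Real.exp 1) (hA : 0 ≤ A) (hZ : 0 ≤ Z) :
    ∃ D ρ : ℝ, 0 ≤ D ∧ 0 ≤ ρ ∧ ρ < 1 ∧ ∀ n k m : ℕ, 1 ≤ n → k ≤ n → 2 * m ≤ k →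
      (C / Real.sqrt n) ^ n *
        ((n.factorial : ℝ) / ((n - k).factorial * (m.factorial * 2 ^ m * (k - 2*m).factorial))) *
        A ^ (n - k) * Z ^ (k - 2*m) * T ^ m ≤ D * n * ρ ^ n := by
  have he := Real.exp_pos 1
  set s : ℝ := Real.exp ((1:ℝ)/2) with hs_def
  have hs : 0 < s := Real.exp_pos _
  have hs2 : s * s = Real.exp 1 := by
    rw [hs_def, ← Real.exp_add]; norm_num
  set st : ℝ := Real.sqrt T with hst_def
  have hst : 0 < st := Real.sqrt_pos.mpr hT
  have hst2 : st * st = T := Real.mul_self_sqrt hT.le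
  set u : ℝ := C * st / s with hu_def
  have hu : 0 < u := by positivity
  have hu2 : u * u * Real.exp 1 = C ^ 2 * T := by
    rw [hu_def, ← hs2, ← hst2]; field_simp
  have huu : u * u < 1 := by
    by_contra hcon
    push_neg at hcon
    have h2 : Real.exp 1 ≤ u * u * Real.exp 1 := le_mul_of_one_le_left he.le hcon
    rw [hu2] at h2
    linarith
  have hu1 : u < 1 := by
    have h0 := mul_self_nonneg (u - 1)
    have hexp : (u-1)*(u-1) = u*u - 2*u + 1 := by ring
    rw [hexp] at h0
    linarith
  set ρ : ℝ := (u + 1) / 2 with hρ_def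
  have hρ0 : 0 < ρ := by positivity
  have hρ1 : ρ < 1 := by rw [hρ_def]; linarith
  have huρ : u < ρ := by rw [hρ_def]; linarith
  set β : ℝ := Real.log (ρ / u) with hβ_def
  have hβ : 0 < β := Real.log_pos ((one_lt_div hu).mpr huρ)
  have hexpβ : Real.exp β = ρ / u := Real.exp_log (by positivity)
  set c : ℝ := (A + Z) / st with hc_def
  have hc : 0 ≤ c := by positivity
  have hcst : c * st = A + Z := by rw [hc_def]; field_simp
  clear_value s
  clear_value u ρ β c
  refine ⟨Real.exp 1 * Real.exp (c^2/(4*β)), ρ, by positivity, hρ0.le, hρ1, ?_⟩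
  intro n k m hn hk hm
  set sn : ℝ := Real.sqrt n with hsn_def
  have hn0 : (0:ℝ) < n := by exact_mod_cast hn
  have hsn : 0 < sn := Real.sqrt_pos.mpr hn0
  have hsn2 : sn * sn = (n:ℝ) := Real.mul_self_sqrt hn0.le
  set r : ℝ := sn / st with hr_def
  have hr : 0 < r := by positivity
  have hrst : r * st = sn := by rw [hr_def]; field_simp
  clear_value sn
  clear_value r
  have hfact : ∀ j : ℕ, (0:ℝ) < j.factorial := fun j => by exact_mod_cast j.factorial_pos
  have hsplit : (C / sn) ^ n *
        ((n.factorial : ℝ) / ((n - k).factorial * (m.factorial * 2 ^ m * (k - 2*m).factorial))) *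
        A ^ (n - k) * Z ^ (k - 2*m) * T ^ m
      = (C / sn) ^ n * (n.factorial : ℝ) * (A ^ (n-k) / (n-k).factorial) *
        (Z ^ (k-2*m) / (k-2*m).factorial) * ((T/2) ^ m / m.factorial) := by
    have h1 : sn ≠ 0 := hsn.ne'
    field_simp
    rw [div_pow]
    field_simp
  rw [hsplit]
  have hrpow : r ^ (n-k) * r ^ (k-2*m) * r ^ (2*m) = r ^ n := by
    rw [← pow_add, ← pow_add]; congr 1; omega
  have key1 : (C / sn) ^ n * (n.factorial : ℝ) * (A ^ (n-k) / (n-k).factorial) *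
        (Z ^ (k-2*m) / (k-2*m).factorial) * ((T/2) ^ m / m.factorial)
      ≤ (C / sn) ^ n * (n.factorial : ℝ) * (Real.exp (r*A) / r ^ (n-k)) *
        (Real.exp (r*Z) / r ^ (k-2*m)) * (Real.exp (r^2*(T/2)) / (r^2) ^ m) := by
    gcongr (C / sn) ^ n * (n.factorial : ℝ) * ?_ * ?_ * ?_
    · exact aux_fact hr hA (n-k)
    · exact aux_fact hr hZ (k-2*m)
    · exact aux_fact (pow_pos hr 2) (by positivity) m
  refine key1.trans ?_
  have hprod : (Real.exp (r*A) / r ^ (n-k)) * (Real.exp (r*Z) / r ^ (k-2*m)) *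
        (Real.exp (r^2*(T/2)) / (r^2) ^ m)
      = Real.exp (r*A) * Real.exp (r*Z) * Real.exp (r^2*(T/2)) / r ^ n := by
    rw [← pow_mul, div_mul_div_comm, div_mul_div_comm, hrpow]
  have hexps : Real.exp (r*A) * Real.exp (r*Z) * Real.exp (r^2*(T/2))
      = Real.exp (c * sn) * s ^ n := by
    rw [← Real.exp_add, ← Real.exp_add]
    have h1 : r*A + r*Z + r^2*(T/2) = c * sn + (n:ℝ) * (1/2) := by
      rw [hr_def, hc_def, div_pow,
        show sn^2 = (n:ℝ) by rw [sq]; exact hsn2, show st^2 = T by rw [sq]; exact hst2]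
      field_simp
    rw [h1, Real.exp_add, Real.exp_nat_mul, ← hs_def]
  have hcsn : Real.exp (c * sn) ≤ Real.exp (c^2/(4*β)) * (ρ/u) ^ n := by
    rw [← hexpβ, ← Real.exp_nat_mul, ← Real.exp_add]
    apply Real.exp_le_exp.mpr
    have h4 : c * sn ≤ (c^2 + 4*β^2*sn^2)/(4*β) :=
      (le_div_iff₀ (by positivity)).mpr (by
        have h0 := sq_nonneg (c - 2*β*sn)
        have hexp : (c - 2*β*sn)^2 = c^2 - 4*β*(c*sn) + 4*β^2*sn^2 := by ring
        rw [hexp] at h0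
        linarith)
    have heq : (c^2 + 4*β^2*sn^2)/(4*β) = c^2/(4*β) + (n:ℝ)*β := by
      rw [← hsn2]
      field_simp
    linarith [h4, heq.le]
  calc (C / sn) ^ n * (n.factorial : ℝ) * (Real.exp (r*A) / r ^ (n-k)) *
        (Real.exp (r*Z) / r ^ (k-2*m)) * (Real.exp (r^2*(T/2)) / (r^2) ^ m)
      = (C / sn) ^ n * (n.factorial : ℝ) * ((Real.exp (r*A) / r ^ (n-k)) *
        (Real.exp (r*Z) / r ^ (k-2*m)) * (Real.exp (r^2*(T/2)) / (r^2) ^ m)) := by ring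
    _ = (n.factorial : ℝ) * ((C / sn) ^ n / r ^ n) * (Real.exp (c * sn) * s ^ n) := by
        rw [hprod, hexps]; ring
    _ ≤ (Real.exp 1 * n * ((n:ℝ)/Real.exp 1) ^ n) * ((C / sn) ^ n / r ^ n) *
        ((Real.exp (c^2/(4*β)) * (ρ/u) ^ n) * s ^ n) := by
        gcongr ?_ * ((C / sn) ^ n / r ^ n) * ?_
        · exact factorial_le_stirling n hn
        · exact mul_le_mul_of_nonneg_right hcsn (by positivity)
    _ = (Real.exp 1 * Real.exp (c^2/(4*β))) * n *
        (((n:ℝ)/Real.exp 1) * (C/sn) / r * (ρ/u) * s) ^ n := by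
        rw [mul_pow, mul_pow, div_pow (((n:ℝ)/Real.exp 1) * (C/sn)), mul_pow]
        ring
    _ = (Real.exp 1 * Real.exp (c^2/(4*β))) * n * ρ ^ n := by
        congr 2
        rw [hr_def, hu_def, ← hs2, ← hsn2]
        field_simp

private lemma growth_bound (F : ℂ → ℂ)
    (hL : Filter.IsBoundedUnder (· ≤ ·) Filter.atTop (coefGrowthSeq F))
    (τ : ℂ) (hτ : ‖τ‖ * Lgrowth F ^ 2 < Real.exp 1) :
    ∃ C K T : ℝ, 0 < C ∧ 0 ≤ K ∧ 0 < T ∧ ‖τ‖ ≤ T ∧ C ^ 2 * T < Real.exp 1 ∧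
      ∀ n : ℕ, 1 ≤ n → ‖taylorCoeff F n‖ ≤ K * (C / Real.sqrt n) ^ n := by
  have he := Real.exp_pos 1
  set L : ℝ := Lgrowth F with hL_def
  obtain ⟨C, hC0, hLC, hCe⟩ : ∃ C : ℝ, 0 < C ∧ L < C ∧ ‖τ‖ * C ^ 2 < Real.exp 1 := by
    rcases eq_or_lt_of_le (norm_nonneg τ) with h0 | h0
    · exact ⟨max L 0 + 1, by positivity, by
        have := le_max_left L 0; linarith, by rw [← h0]; simpa using he⟩
    · set S : ℝ := Real.sqrt (Real.exp 1 / ‖τ‖) with hS_def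
      have hS0 : 0 < S := Real.sqrt_pos.mpr (by positivity)
      have hmax : max L 0 < S := by
        rw [hS_def]
        rw [show max L 0 = Real.sqrt ((max L 0)^2) from (Real.sqrt_sq (le_max_right L 0)).symm]
        apply Real.sqrt_lt_sqrt (by positivity)
        rw [lt_div_iff₀ h0]
        rcases le_or_gt L 0 with hL0 | hL0
        · rw [max_eq_right hL0]; simpa using he
        · rw [max_eq_left hL0.le]
          calc L ^ 2 * ‖τ‖ = ‖τ‖ * L ^ 2 := by ring
            _ < Real.exp 1 := hτ
      refine ⟨(max L 0 + S)/2, by positivity, ?_, ?_⟩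
      · have := le_max_left L 0; linarith
      · have hCS : (max L 0 + S)/2 < S := by
          have := le_max_right L 0; linarith
        have hC0' : 0 ≤ (max L 0 + S)/2 := by positivity
        calc ‖τ‖ * ((max L 0 + S)/2) ^ 2 < ‖τ‖ * S ^ 2 := by
              apply mul_lt_mul_of_pos_left _ h0
              exact pow_lt_pow_left₀ hCS hC0' (by norm_num)
          _ = Real.exp 1 := by
              rw [hS_def, Real.sq_sqrt (by positivity), mul_div_cancel₀ _ h0.ne']
  have hτC : ‖τ‖ < Real.exp 1 / C ^ 2 := by
    rw [lt_div_iff₀ (by positivity)]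
    calc ‖τ‖ * C ^ 2 < Real.exp 1 := hCe
      _ = Real.exp 1 := rfl
  set T : ℝ := (‖τ‖ + Real.exp 1 / C ^ 2) / 2 with hT_def
  have hT0 : 0 < T := by
    have := norm_nonneg τ
    rw [hT_def]; positivity
  have hτT : ‖τ‖ ≤ T := by rw [hT_def]; linarith
  have hCT : C ^ 2 * T < Real.exp 1 := by
    rw [hT_def]
    have h2 : C ^ 2 * ((‖τ‖ + Real.exp 1 / C ^ 2) / 2)
        = (C ^ 2 * ‖τ‖ + Real.exp 1) / 2 := by
      field_simp
    rw [h2]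
    have := hCe
    linarith [hCe, mul_comm (C^2) (‖τ‖) ▸ hCe]
  have hev : ∀ᶠ n in atTop, coefGrowthSeq F n < C :=
    eventually_lt_of_limsup_lt hLC hL
  obtain ⟨N, hN⟩ := eventually_atTop.mp hev
  have hbig : ∀ n : ℕ, N ≤ n → 1 ≤ n →
      ‖taylorCoeff F n‖ ≤ (C / Real.sqrt n) ^ n := by
    intro n hNn h1n
    have hn0 : (0:ℝ) < n := by exact_mod_cast h1n
    have hsn : 0 < Real.sqrt n := Real.sqrt_pos.mpr hn0
    have h2 := hN n hNn
    unfold coefGrowthSeq at h2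
    have h3 : ‖taylorCoeff F n‖ ^ ((n:ℝ)⁻¹) ≤ C / Real.sqrt n := by
      rw [le_div_iff₀ hsn]
      calc ‖taylorCoeff F n‖ ^ ((n:ℝ)⁻¹) * Real.sqrt n
          = Real.sqrt n * ‖taylorCoeff F n‖ ^ ((n:ℝ)⁻¹) := by ring
        _ ≤ C := h2.le
    have h4 : (‖taylorCoeff F n‖ ^ ((n:ℝ)⁻¹)) ^ n ≤ (C / Real.sqrt n) ^ n :=
      pow_le_pow_left₀ (by positivity) h3 n
    calc ‖taylorCoeff F n‖
        = (‖taylorCoeff F n‖ ^ ((n:ℝ)⁻¹)) ^ n := by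
          rw [← Real.rpow_natCast (‖taylorCoeff F n‖ ^ ((n:ℝ)⁻¹)) n,
            ← Real.rpow_mul (norm_nonneg _),
            inv_mul_cancel₀ (Nat.cast_ne_zero.mpr (by omega) : (n:ℝ) ≠ 0), Real.rpow_one]
      _ ≤ (C / Real.sqrt n) ^ n := h4
  set K : ℝ := 1 + ∑ i ∈ Finset.range (N + 1),
      ‖taylorCoeff F i‖ * (Real.sqrt i / C) ^ i with hK_def
  have hK1 : 1 ≤ K := by
    rw [hK_def]
    have : 0 ≤ ∑ i ∈ Finset.range (N + 1),
        ‖taylorCoeff F i‖ * (Real.sqrt i / C) ^ i :=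
      Finset.sum_nonneg fun i _ => by positivity
    linarith
  refine ⟨C, K, T, hC0, by linarith, hT0, hτT, hCT, ?_⟩
  intro n h1n
  have hn0 : (0:ℝ) < n := by exact_mod_cast h1n
  have hsn : 0 < Real.sqrt n := Real.sqrt_pos.mpr hn0
  rcases le_or_gt N n with h | h
  · calc ‖taylorCoeff F n‖ ≤ (C / Real.sqrt n) ^ n := hbig n h h1n
      _ = 1 * (C / Real.sqrt n) ^ n := (one_mul _).symm
      _ ≤ K * (C / Real.sqrt n) ^ n := by
          apply mul_le_mul_of_nonneg_right hK1 (by positivity)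
  · have hmem : n ∈ Finset.range (N + 1) := Finset.mem_range.mpr (by omega)
    have hle : ‖taylorCoeff F n‖ * (Real.sqrt n / C) ^ n ≤ K - 1 := by
      rw [hK_def, add_sub_cancel_left]
      exact Finset.single_le_sum
        (f := fun i => ‖taylorCoeff F i‖ * (Real.sqrt i / C) ^ i)
        (fun i _ => by positivity) hmem
    have hcancel : (Real.sqrt n / C) ^ n * (C / Real.sqrt n) ^ n = 1 := by
      rw [← mul_pow, div_mul_div_comm, mul_comm (Real.sqrt n) C, div_self (by positivity),
        one_pow]
    calc ‖taylorCoeff F n‖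
        = ‖taylorCoeff F n‖ * ((Real.sqrt n / C) ^ n * (C / Real.sqrt n) ^ n) := by
          rw [hcancel, mul_one]
      _ = (‖taylorCoeff F n‖ * (Real.sqrt n / C) ^ n) * (C / Real.sqrt n) ^ n := by
          ring
      _ ≤ (K - 1) * (C / Real.sqrt n) ^ n := by
          apply mul_le_mul_of_nonneg_right hle (by positivity)
      _ ≤ K * (C / Real.sqrt n) ^ n := by
          apply mul_le_mul_of_nonneg_right (by linarith) (by positivity)

private lemma iter_iter (F : ℂ → ℂ) (k j : ℕ) :
    iteratedDeriv j (iteratedDeriv k F) = iteratedDeriv (k + j) F := by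
  induction j with
  | zero => simp
  | succ j ih =>
    rw [iteratedDeriv_succ, ih, ← iteratedDeriv_succ]
    rfl

private lemma hasSum_taylorCoeff_translate (F : ℂ → ℂ) (hF : Differentiable ℂ F) (a : ℂ)
    (k : ℕ) :
    HasSum (fun j : ℕ => (((k+j).choose k : ℕ) : ℂ) * taylorCoeff F (k+j) * a ^ j)
      (taylorCoeff (fun w => F (a + w)) k) := by
  have hDk : Differentiable ℂ (iteratedDeriv k F) :=
    (hF.contDiff (n := (k+1 : ℕ))).differentiable_iteratedDeriv'
  have key := (Complex.hasSum_taylorSeries_of_entire hDk 0 a).div_const (k.factorial : ℂ)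
  have hfun : (fun j : ℕ => ((j.factorial : ℂ)⁻¹ • (a - 0) ^ j •
        iteratedDeriv j (iteratedDeriv k F) 0) / (k.factorial : ℂ))
      = fun j : ℕ => (((k+j).choose k : ℕ) : ℂ) * taylorCoeff F (k+j) * a ^ j := by
    funext j
    rw [iter_iter F k j, sub_zero, taylorCoeff, Nat.cast_choose ℂ (Nat.le_add_right k j)]
    have e1 : k + j - k = j := by omega
    rw [e1]
    simp only [smul_eq_mul]
    have h1 : (j.factorial : ℂ) ≠ 0 := Nat.cast_ne_zero.mpr (Nat.factorial_ne_zero _)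
    have h2 : (k.factorial : ℂ) ≠ 0 := Nat.cast_ne_zero.mpr (Nat.factorial_ne_zero _)
    have h3 : ((k+j).factorial : ℂ) ≠ 0 := Nat.cast_ne_zero.mpr (Nat.factorial_ne_zero _)
    field_simp
  rw [hfun] at key
  have hval : taylorCoeff (fun w => F (a + w)) k = iteratedDeriv k F a / k.factorial := by
    rw [taylorCoeff, iteratedDeriv_comp_const_add]
    simp
  rw [hval]
  exact key

private lemma heatTerm_translate (τ a z : ℂ) (n : ℕ) :
    heatTerm τ (a + z) n
      = ∑ k ∈ Finset.range (n+1), (n.choose k : ℂ) * a ^ (n - k) * heatTerm τ z k := by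
  unfold heatTerm
  calc ∑ m ∈ Finset.range (n/2+1),
        ((-1:ℂ)^m * n.factorial / (m.factorial * 2^m * (n-2*m).factorial)) * (a+z)^(n-2*m) * τ^m
      = ∑ m ∈ Finset.range (n/2+1), ∑ i ∈ Finset.range (n-2*m+1),
          ((-1:ℂ)^m * n.factorial / (m.factorial * 2^m * (n-2*m).factorial)) *
            (z^i * a^(n-2*m-i) * ((n-2*m).choose i : ℂ)) * τ^m := by
        refine Finset.sum_congr rfl fun m hm => ?_
        rw [add_comm a z, add_pow, Finset.mul_sum, Finset.sum_mul]
    _ = ∑ k ∈ Finset.range (n+1), ∑ m ∈ Finset.range (k/2+1),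
          (n.choose k : ℂ) * a^(n-k) *
            (((-1:ℂ)^m * k.factorial / (m.factorial * 2^m * (k-2*m).factorial)) *
              z^(k-2*m) * τ^m) := by
        rw [Finset.sum_sigma', Finset.sum_sigma']
        refine Finset.sum_nbij' (fun x => ⟨x.2 + 2*x.1, x.1⟩) (fun x => ⟨x.2, x.1 - 2*x.2⟩)
          ?_ ?_ ?_ ?_ ?_
        · rintro ⟨m, i⟩ h
          simp only [Finset.mem_sigma, Finset.mem_range] at h ⊢
          omega
        · rintro ⟨k, m⟩ h
          simp only [Finset.mem_sigma, Finset.mem_range] at h ⊢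
          omega
        · rintro ⟨m, i⟩ h
          simp only [Finset.mem_sigma, Finset.mem_range] at h
          show (⟨m, i + 2*m - 2*m⟩ : Σ _ : ℕ, ℕ) = ⟨m, i⟩
          have e : i + 2*m - 2*m = i := by omega
          rw [e]
        · rintro ⟨k, m⟩ h
          simp only [Finset.mem_sigma, Finset.mem_range] at h
          show (⟨k - 2*m + 2*m, m⟩ : Σ _ : ℕ, ℕ) = ⟨k, m⟩
          have e : k - 2*m + 2*m = k := by omega
          rw [e]
        · rintro ⟨m, i⟩ h
          simp only [Finset.mem_sigma, Finset.mem_range] at h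
          have h1 : i ≤ n - 2*m := by omega
          have h2 : i + 2*m ≤ n := by omega
          have e1 : i + 2*m - 2*m = i := by omega
          have e2 : n - (i + 2*m) = n - 2*m - i := by omega
          simp only [e1, e2]
          rw [Nat.cast_choose ℂ h1, Nat.cast_choose ℂ h2, e2]
          have f1 : ((n-2*m).factorial : ℂ) ≠ 0 := Nat.cast_ne_zero.mpr (Nat.factorial_ne_zero _)
          have f2 : (m.factorial : ℂ) ≠ 0 := Nat.cast_ne_zero.mpr (Nat.factorial_ne_zero _)
          have f3 : (i.factorial : ℂ) ≠ 0 := Nat.cast_ne_zero.mpr (Nat.factorial_ne_zero _)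
          have f4 : ((n-2*m-i).factorial : ℂ) ≠ 0 :=
            Nat.cast_ne_zero.mpr (Nat.factorial_ne_zero _)
          have f5 : ((i+2*m).factorial : ℂ) ≠ 0 := Nat.cast_ne_zero.mpr (Nat.factorial_ne_zero _)
          have f6 : ((2:ℂ))^m ≠ 0 := by norm_num
          field_simp
    _ = ∑ k ∈ Finset.range (n+1), (n.choose k : ℂ) * a ^ (n - k) *
          ∑ m ∈ Finset.range (k/2+1),
            ((-1:ℂ)^m * k.factorial / (m.factorial * 2^m * (k-2*m).factorial)) *
              z^(k-2*m) * τ^m := by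
        refine Finset.sum_congr rfl fun k hk => ?_
        rw [Finset.mul_sum]

private lemma heatTerm_norm_le (τ z : ℂ) (k : ℕ) :
    ‖heatTerm τ z k‖ ≤ ∑ m ∈ Finset.range (k/2+1),
      (k.factorial : ℝ) / (m.factorial * 2^m * (k-2*m).factorial) *
        ‖z‖ ^ (k-2*m) * ‖τ‖ ^ m := by
  refine (norm_sum_le _ _).trans_eq ?_
  refine Finset.sum_congr rfl fun m hm => ?_
  simp [norm_mul, norm_div, norm_pow, Complex.norm_natCast]


/-- The summand of the rearranged double series. -/
private noncomputable def uaux (F : ℂ → ℂ) (τ a z : ℂ) (p : ℕ × ℕ) : ℂ :=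
  (((p.1 + p.2).choose p.1 : ℕ) : ℂ) * taylorCoeff F (p.1 + p.2) * a ^ p.2 * heatTerm τ z p.1

set_option maxHeartbeats 1000000 in
private lemma fiber_bound (F : ℂ → ℂ) (τ a z : ℂ) {C K T D ρ : ℝ}
    (hC0 : 0 < C) (hK0 : 0 ≤ K) (hτT : ‖τ‖ ≤ T) (hD0 : 0 ≤ D) (hρ0 : 0 ≤ ρ)
    (hcoef : ∀ n : ℕ, 1 ≤ n → ‖taylorCoeff F n‖ ≤ K * (C / Real.sqrt n) ^ n)
    (hcore : ∀ n k m : ℕ, 1 ≤ n → k ≤ n → 2 * m ≤ k →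
      (C / Real.sqrt n) ^ n *
        ((n.factorial : ℝ) / ((n - k).factorial * (m.factorial * 2 ^ m * (k - 2*m).factorial))) *
        ‖a‖ ^ (n - k) * ‖z‖ ^ (k - 2*m) * T ^ m ≤ D * n * ρ ^ n)
    (n : ℕ) (hn : 1 ≤ n) :
    ∑ p ∈ Finset.HasAntidiagonal.antidiagonal n, ‖uaux F τ a z p‖
      ≤ ((n:ℝ)+1) * (((n:ℝ)+1) * (K * (D * n * ρ^n))) := by
  rw [Finset.Nat.sum_antidiagonal_eq_sum_range_succ (fun k j => ‖uaux F τ a z (k, j)‖)]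
  have hterm : ∀ k ∈ Finset.range (n+1), ‖uaux F τ a z (k, n-k)‖
      ≤ ((n:ℝ)+1) * (K * (D * n * ρ^n)) := by
    intro k hk
    have hkn : k ≤ n := by
      have := Finset.mem_range.mp hk; omega
    have hkk : k + (n - k) = n := by omega
    have habs : ‖uaux F τ a z (k, n-k)‖
        = (n.choose k : ℝ) * ‖taylorCoeff F n‖ * ‖a‖ ^ (n-k) *
          ‖heatTerm τ z k‖ := by
      unfold uaux
      show ‖(((k + (n-k)).choose k : ℕ) : ℂ) * taylorCoeff F (k + (n-k)) *
        a ^ (n-k) * heatTerm τ z k‖ = _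
      rw [hkk, norm_mul, norm_mul, norm_mul, norm_pow, Complex.norm_natCast]
    rw [habs]
    calc (n.choose k : ℝ) * ‖taylorCoeff F n‖ * ‖a‖ ^ (n-k) *
          ‖heatTerm τ z k‖
        ≤ (n.choose k : ℝ) * (K * (C / Real.sqrt n) ^ n) * ‖a‖ ^ (n-k) *
          (∑ m ∈ Finset.range (k/2+1),
            (k.factorial : ℝ) / (m.factorial * 2^m * (k-2*m).factorial) *
              ‖z‖ ^ (k-2*m) * ‖τ‖ ^ m) := by
          gcongr
          · exact hcoef n hn
          · exact heatTerm_norm_le τ z k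
      _ = ∑ m ∈ Finset.range (k/2+1), (n.choose k : ℝ) * (K * (C / Real.sqrt n) ^ n) *
            ‖a‖ ^ (n-k) *
            ((k.factorial : ℝ) / (m.factorial * 2^m * (k-2*m).factorial) *
              ‖z‖ ^ (k-2*m) * ‖τ‖ ^ m) := by
          rw [Finset.mul_sum]
      _ ≤ ∑ m ∈ Finset.range (k/2+1), K * (D * n * ρ^n) := by
          refine Finset.sum_le_sum fun m hm => ?_
          have hmk : 2 * m ≤ k := by
            have := Finset.mem_range.mp hm
            omega
          have heq2 : (n.choose k : ℝ) * (K * (C / Real.sqrt n) ^ n) *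
              ‖a‖ ^ (n-k) *
              ((k.factorial : ℝ) / (m.factorial * 2^m * (k-2*m).factorial) *
                ‖z‖ ^ (k-2*m) * ‖τ‖ ^ m)
              = K * ((C / Real.sqrt n) ^ n *
                  ((n.factorial : ℝ) /
                    ((n - k).factorial * (m.factorial * 2 ^ m * (k - 2*m).factorial))) *
                  ‖a‖ ^ (n - k) * ‖z‖ ^ (k - 2*m) *
                  ‖τ‖ ^ m) := by
            rw [Nat.cast_choose ℝ hkn]
            have f1 : (k.factorial : ℝ) ≠ 0 := by
              exact_mod_cast (Nat.factorial_ne_zero k)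
            have f2 : ((n-k).factorial : ℝ) ≠ 0 := by
              exact_mod_cast (Nat.factorial_ne_zero (n-k))
            have f3 : (m.factorial : ℝ) ≠ 0 := by
              exact_mod_cast (Nat.factorial_ne_zero m)
            have f4 : ((k-2*m).factorial : ℝ) ≠ 0 := by
              exact_mod_cast (Nat.factorial_ne_zero (k-2*m))
            have f5 : ((2:ℝ))^m ≠ 0 := by norm_num
            field_simp
          rw [heq2]
          have hstep : (C / Real.sqrt n) ^ n *
                ((n.factorial : ℝ) /
                  ((n - k).factorial * (m.factorial * 2 ^ m * (k - 2*m).factorial))) *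
                ‖a‖ ^ (n - k) * ‖z‖ ^ (k - 2*m) * ‖τ‖ ^ m
              ≤ D * n * ρ^n := by
            calc (C / Real.sqrt n) ^ n *
                  ((n.factorial : ℝ) /
                    ((n - k).factorial * (m.factorial * 2 ^ m * (k - 2*m).factorial))) *
                  ‖a‖ ^ (n - k) * ‖z‖ ^ (k - 2*m) * ‖τ‖ ^ m
                ≤ (C / Real.sqrt n) ^ n *
                  ((n.factorial : ℝ) /
                    ((n - k).factorial * (m.factorial * 2 ^ m * (k - 2*m).factorial))) *
                  ‖a‖ ^ (n - k) * ‖z‖ ^ (k - 2*m) * T ^ m := by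
                  gcongr
              _ ≤ D * n * ρ^n := hcore n k m hn hkn hmk
          exact mul_le_mul_of_nonneg_left hstep hK0
      _ = ((k/2+1 : ℕ) : ℝ) * (K * (D * n * ρ^n)) := by
          rw [Finset.sum_const, Finset.card_range, nsmul_eq_mul]
      _ ≤ ((n:ℝ)+1) * (K * (D * n * ρ^n)) := by
          apply mul_le_mul_of_nonneg_right _ (by positivity)
          have : (k/2+1 : ℕ) ≤ n+1 := by omega
          exact_mod_cast this
  calc ∑ k ∈ Finset.range (n+1), ‖uaux F τ a z (k, n-k)‖
      ≤ ∑ k ∈ Finset.range (n+1), ((n:ℝ)+1) * (K * (D * n * ρ^n)) :=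
        Finset.sum_le_sum hterm
    _ = ((n+1 : ℕ) : ℝ) * (((n:ℝ)+1) * (K * (D * n * ρ^n))) := by
        rw [Finset.sum_const, Finset.card_range, nsmul_eq_mul]
    _ = ((n:ℝ)+1) * (((n:ℝ)+1) * (K * (D * n * ρ^n))) := by push_cast; ring

set_option maxHeartbeats 1000000 in
/-- the heat flow commutes with translations:
`e^{-τD²/2}[w ↦ F(a+w)](z) = (e^{-τD²/2}F)(a+z)`. -/
theorem heat_flow_commutes_with_translation (F : ℂ → ℂ) (hF : Differentiable ℂ F)
    (hL : Filter.IsBoundedUnder (· ≤ ·) Filter.atTop (coefGrowthSeq F))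
    (τ : ℂ) (hτ : ‖τ‖ * Lgrowth F ^ 2 < Real.exp 1) (a : ℂ) :
    ∀ z : ℂ, heatFlow (fun w => F (a + w)) τ z = heatFlow F τ (a + z) := by
  intro z
  obtain ⟨C, K, T, hC0, hK0, hT0, hτT, hCT, hcoef⟩ := growth_bound F hL τ hτ
  obtain ⟨D, ρ, hD0, hρ0, hρ1, hcore⟩ :=
    core_bound hC0 hT0 hCT (norm_nonneg a) (norm_nonneg z)
  have hfiber := fiber_bound F τ a z hC0 hK0 hτT hD0 hρ0 hcoef hcore
  -- summable majorant
  set E : ℝ := max (K * D) (‖taylorCoeff F 0‖) with hE_def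
  have hE0 : 0 ≤ E := le_trans (by positivity) (le_max_left _ _)
  have hρn : ‖ρ‖ < 1 := by rw [Real.norm_eq_abs, abs_of_nonneg hρ0]; exact hρ1
  have hg : Summable (fun n : ℕ => ((n:ℝ)+1)^3 * ρ^n) := by
    have s3 := summable_pow_mul_geometric_of_norm_lt_one 3 hρn
    have s2 := summable_pow_mul_geometric_of_norm_lt_one 2 hρn
    have s1 := summable_pow_mul_geometric_of_norm_lt_one 1 hρn
    have s0 := summable_pow_mul_geometric_of_norm_lt_one 0 hρn
    refine (((s3.add (s2.mul_left 3)).add ((s1.mul_left 3).add s0)).congr fun n => ?_)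
    push_cast
    ring
  have hgsum : Summable (fun n : ℕ => E * (((n:ℝ)+1)^3 * ρ^n)) := hg.mul_left E
  -- bound on fibers by the majorant
  have hmaj : ∀ n : ℕ, ∑ p ∈ Finset.HasAntidiagonal.antidiagonal n, ‖uaux F τ a z p‖
      ≤ E * (((n:ℝ)+1)^3 * ρ^n) := by
    intro n
    rcases Nat.eq_zero_or_pos n with h0 | h1
    · subst h0
      rw [Finset.Nat.antidiagonal_zero, Finset.sum_singleton]
      have hA : uaux F τ a z (0,0) = taylorCoeff F 0 := by
        unfold uaux
        simp [heatTerm_zero]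
      rw [hA]
      have : ‖taylorCoeff F 0‖ ≤ E := le_max_right _ _
      simpa using this
    · have hb := hfiber n h1
      refine hb.trans ?_
      have hKD : K * D ≤ E := le_max_left _ _
      have hn1 : (0:ℝ) ≤ (n:ℝ) := Nat.cast_nonneg n
      calc ((n:ℝ)+1) * (((n:ℝ)+1) * (K * (D * n * ρ^n)))
          = (K*D) * ((((n:ℝ)+1) * (((n:ℝ)+1) * (n:ℝ))) * ρ^n) := by ring
        _ ≤ E * ((((n:ℝ)+1) * (((n:ℝ)+1) * ((n:ℝ)+1))) * ρ^n) := by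
            have h2 : (((n:ℝ)+1) * (((n:ℝ)+1) * (n:ℝ))) * ρ^n
                ≤ (((n:ℝ)+1) * (((n:ℝ)+1) * ((n:ℝ)+1))) * ρ^n := by
              gcongr
              linarith
            calc (K*D) * ((((n:ℝ)+1) * (((n:ℝ)+1) * (n:ℝ))) * ρ^n)
                ≤ (K*D) * ((((n:ℝ)+1) * (((n:ℝ)+1) * ((n:ℝ)+1))) * ρ^n) :=
                  mul_le_mul_of_nonneg_left h2 (by positivity)
              _ ≤ E * ((((n:ℝ)+1) * (((n:ℝ)+1) * ((n:ℝ)+1))) * ρ^n) :=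
                  mul_le_mul_of_nonneg_right hKD (by positivity)
        _ = E * (((n:ℝ)+1)^3 * ρ^n) := by ring
  -- summability of the sigma-indexed family
  have htsub : ∀ n : ℕ, ∑' (c : (Finset.HasAntidiagonal.antidiagonal n : Finset (ℕ×ℕ))),
      ‖uaux F τ a z ↑c‖
      = ∑ p ∈ Finset.HasAntidiagonal.antidiagonal n, ‖uaux F τ a z p‖ := fun n =>
    Finset.tsum_subtype (Finset.HasAntidiagonal.antidiagonal n) (fun p => ‖uaux F τ a z p‖)
  have habs : Summable (fun x : Σ n : ℕ, (Finset.HasAntidiagonal.antidiagonal n : Finset (ℕ×ℕ)) =>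
      ‖uaux F τ a z ↑x.2‖) := by
    refine (summable_sigma_of_nonneg fun x => norm_nonneg _).mpr
      ⟨fun n => Summable.of_finite, ?_⟩
    refine hgsum.of_nonneg_of_le (fun n => ?_) (fun n => ?_)
    · rw [htsub n]
      exact Finset.sum_nonneg fun p _ => norm_nonneg _
    · rw [htsub n]
      exact hmaj n
  have hσsum : Summable (fun x : Σ n : ℕ, (Finset.HasAntidiagonal.antidiagonal n : Finset (ℕ×ℕ)) =>
      uaux F τ a z ↑x.2) := by
    apply Summable.of_norm
    simpa only using habs
  have husum : Summable (uaux F τ a z) :=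
    (Equiv.summable_iff (Finset.HasAntidiagonal.sigmaAntidiagonalEquivProd (A := ℕ))).mp hσsum
  -- the chain of equalities
  calc heatFlow (fun w => F (a + w)) τ z
      = ∑' k : ℕ, taylorCoeff (fun w => F (a + w)) k * heatTerm τ z k := rfl
    _ = ∑' k : ℕ, ∑' j : ℕ, uaux F τ a z (k, j) := by
        refine tsum_congr fun k => ?_
        exact (((hasSum_taylorCoeff_translate F hF a k).mul_right
          (heatTerm τ z k)).tsum_eq).symm
    _ = ∑' p : ℕ × ℕ, uaux F τ a z p := (Summable.tsum_prod husum).symm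
    _ = ∑' x : Σ n : ℕ, (Finset.HasAntidiagonal.antidiagonal n : Finset (ℕ×ℕ)), uaux F τ a z ↑x.2 :=
        ((Finset.HasAntidiagonal.sigmaAntidiagonalEquivProd (A := ℕ)).tsum_eq (uaux F τ a z)).symm
    _ = ∑' n : ℕ, ∑' (c : (Finset.HasAntidiagonal.antidiagonal n : Finset (ℕ×ℕ))), uaux F τ a z ↑c :=
        Summable.tsum_sigma hσsum
    _ = ∑' n : ℕ, taylorCoeff F n * heatTerm τ (a + z) n := by
        refine tsum_congr fun n => ?_
        rw [Finset.tsum_subtype (Finset.HasAntidiagonal.antidiagonal n) (fun p => uaux F τ a z p)]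
        rw [Finset.Nat.sum_antidiagonal_eq_sum_range_succ (fun k j => uaux F τ a z (k, j))]
        rw [heatTerm_translate τ a z n, Finset.mul_sum]
        refine Finset.sum_congr rfl fun k hk => ?_
        have hkn : k ≤ n := by have := Finset.mem_range.mp hk; omega
        have hkk : k + (n - k) = n := by omega
        unfold uaux
        show (((k + (n-k)).choose k : ℕ) : ℂ) * taylorCoeff F (k + (n-k)) * a ^ (n-k) *
          heatTerm τ z k = taylorCoeff F n * ((n.choose k : ℂ) * a ^ (n-k) * heatTerm τ z k)
        rw [hkk]
        push_cast
        ring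
    _ = heatFlow F τ (a + z) := rfl

end
end

section
/- Fix c ∈ ℂ and an open disk D ⊂ ℂ. Suppose a₁, a₂ : D → ℂ and z_j : D → ℂ (j ∈ ℕ) are holomorphic functions such that for every τ ∈ D the values z_j(τ) are pairwise distinct and all different from c, and such that the following system holds for all τ ∈ D, with each series on the right-hand side converging locally uniformly on D: a₁′(τ) = −a₁(τ)a₂(τ) + ∑_k 1/(z_k(τ)−c)³; a₂′(τ) = −a₂(τ)² + 2a₁(τ)·∑_k 1/(z_k(τ)−c)³ + 3·∑_k 1/(z_k(τ)−c)⁴; z_j′(τ) = a₁(τ) + a₂(τ)(z_j(τ)−c) + ∑_k ( 1_{k ≠ j}/(z_j(τ)−z_k(τ)) + 1/(z_k(τ)−c) + (z_j(τ)−c)/(z_k(τ)−c)² ) for every j. If (â₁, â₂, (ẑ_j)_{j∈ℕ}) is another family of holomorphic functions on D satisfying the same system with locally uniformly convergent series, and if there is τ₀ ∈ D with a₁(τ₀)=â₁(τ₀), a₂(τ₀)=â₂(τ₀) and z_j(τ₀)=ẑ_j(τ₀) for all j, then a₁=â₁, a₂=â₂ and z_j=ẑ_j on all of D. -/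
open Filter Metric Set

noncomputable section

/-- The summand in the ODE for the `j`-th zero:
`1_{k ≠ j}/(z_j - z_k) + 1/(z_k - c) + (z_j - c)/(z_k - c)²`. -/
def odeSummand (c : ℂ) (z : ℕ → ℂ → ℂ) (j k : ℕ) (τ : ℂ) : ℂ :=
  (if k = j then 0 else (z j τ - z k τ)⁻¹) + (z k τ - c)⁻¹ + (z j τ - c) / (z k τ - c) ^ 2

/-- A family `(a₁, a₂, (z_j)_j)` of holomorphic functions on `D` is a solution of the (S2)
zero-evolution ODE system with base point `c`: the `z_j(τ)` are pairwise distinct and `≠ c`,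
each series on the right-hand side converges locally uniformly on `D`, and the three
differential equations hold on `D`. -/
structure IsHeatODESolution (D : Set ℂ) (c : ℂ) (a₁ a₂ : ℂ → ℂ) (z : ℕ → ℂ → ℂ) : Prop where
  diff_a₁ : DifferentiableOn ℂ a₁ D
  diff_a₂ : DifferentiableOn ℂ a₂ D
  diff_z : ∀ j, DifferentiableOn ℂ (z j) D
  distinct : ∀ τ ∈ D, ∀ j k, j ≠ k → z j τ ≠ z k τ
  ne_base : ∀ τ ∈ D, ∀ j, z j τ ≠ c
  conv_cube : TendstoLocallyUniformlyOn
    (fun (N : ℕ) (τ : ℂ) => ∑ k ∈ Finset.range N, ((z k τ - c) ^ 3)⁻¹)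
    (fun τ => ∑' k : ℕ, ((z k τ - c) ^ 3)⁻¹) Filter.atTop D
  conv_fourth : TendstoLocallyUniformlyOn
    (fun (N : ℕ) (τ : ℂ) => ∑ k ∈ Finset.range N, ((z k τ - c) ^ 4)⁻¹)
    (fun τ => ∑' k : ℕ, ((z k τ - c) ^ 4)⁻¹) Filter.atTop D
  conv_z : ∀ j, TendstoLocallyUniformlyOn
    (fun (N : ℕ) (τ : ℂ) => ∑ k ∈ Finset.range N, odeSummand c z j k τ)
    (fun τ => ∑' k : ℕ, odeSummand c z j k τ) Filter.atTop D
  ode_a₁ : ∀ τ ∈ D, deriv a₁ τ = -(a₁ τ * a₂ τ) + ∑' k : ℕ, ((z k τ - c) ^ 3)⁻¹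
  ode_a₂ : ∀ τ ∈ D, deriv a₂ τ =
    -(a₂ τ) ^ 2 + 2 * a₁ τ * (∑' k : ℕ, ((z k τ - c) ^ 3)⁻¹) +
      3 * ∑' k : ℕ, ((z k τ - c) ^ 4)⁻¹
  ode_z : ∀ j, ∀ τ ∈ D, deriv (z j) τ =
    a₁ τ + a₂ τ * (z j τ - c) + ∑' k : ℕ, odeSummand c z j k τ

namespace HeatODEAux

open Topology

variable {x : ℂ}

lemma analyticAt_deriv {f : ℂ → ℂ} (h : AnalyticAt ℂ f x) :
    AnalyticAt ℂ (deriv f) x := by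
  have h2 : AnalyticAt ℂ (fun y => fderiv ℂ f y 1) x :=
    ((ContinuousLinearMap.apply ℂ ℂ (1 : ℂ)).analyticAt _).comp h.fderiv
  simpa only [fderiv_apply_one_eq_deriv] using h2

lemma iteratedDeriv_add_at (n : ℕ) {f g : ℂ → ℂ} {x : ℂ}
    (hf : AnalyticAt ℂ f x) (hg : AnalyticAt ℂ g x) :
    iteratedDeriv n (fun y => f y + g y) x = iteratedDeriv n f x + iteratedDeriv n g x := by
  induction n generalizing f g x with
  | zero => simp [iteratedDeriv_zero]
  | succ n ih =>
    have hev : deriv (fun y => f y + g y) =ᶠ[𝓝 x] fun y => deriv f y + deriv g y := by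
      filter_upwards [hf.eventually_analyticAt, hg.eventually_analyticAt] with y hfy hgy
      exact deriv_add hfy.differentiableAt hgy.differentiableAt
    rw [iteratedDeriv_succ', iteratedDeriv_succ', iteratedDeriv_succ',
      hev.iteratedDeriv_eq n]
    exact ih (analyticAt_deriv hf) (analyticAt_deriv hg)

/-- Two functions have equal iterated derivatives at `x` up to order `n`. -/
def DEq (x : ℂ) (n : ℕ) (f g : ℂ → ℂ) : Prop :=
  ∀ m ≤ n, iteratedDeriv m f x = iteratedDeriv m g x

lemma DEq.mono {n m : ℕ} {f g : ℂ → ℂ} (h : DEq x n f g) (hm : m ≤ n) : DEq x m f g :=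
  fun k hk => h k (hk.trans hm)

lemma DEq.refl (n : ℕ) (f : ℂ → ℂ) : DEq x n f f := fun _ _ => rfl

lemma DEq.apply {n : ℕ} {f g : ℂ → ℂ} (h : DEq x n f g) : f x = g x := by
  have := h 0 (Nat.zero_le _)
  simpa [iteratedDeriv_zero] using this

lemma DEq.deriv' {n : ℕ} {f g : ℂ → ℂ} (h : DEq x (n + 1) f g) :
    DEq x n (deriv f) (deriv g) := by
  intro m hm
  simp only [← iteratedDeriv_succ']
  exact h (m + 1) (by omega)

lemma DEq.add {n : ℕ} {f g F G : ℂ → ℂ} (hf : AnalyticAt ℂ f x) (hg : AnalyticAt ℂ g x)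
    (hF : AnalyticAt ℂ F x) (hG : AnalyticAt ℂ G x)
    (h1 : DEq x n f F) (h2 : DEq x n g G) :
    DEq x n (fun y => f y + g y) (fun y => F y + G y) := fun m hm => by
  rw [iteratedDeriv_add_at m hf hg, iteratedDeriv_add_at m hF hG, h1 m hm, h2 m hm]

lemma DEq.neg {n : ℕ} {f g : ℂ → ℂ} (h : DEq x n f g) :
    DEq x n (fun y => -(f y)) (fun y => -(g y)) := fun m hm => by
  rw [iteratedDeriv_fun_neg, iteratedDeriv_fun_neg, h m hm]

private lemma deq_mul_aux (n : ℕ) : ∀ {f g F G : ℂ → ℂ} {x : ℂ},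
    AnalyticAt ℂ f x → AnalyticAt ℂ g x → AnalyticAt ℂ F x → AnalyticAt ℂ G x →
    DEq x n f F → DEq x n g G →
    iteratedDeriv n (fun y => f y * g y) x = iteratedDeriv n (fun y => F y * G y) x := by
  induction n with
  | zero =>
    intro f g F G x _ _ _ _ h1 h2
    simp only [iteratedDeriv_zero]
    rw [h1.apply, h2.apply]
  | succ n ih =>
    intro f g F G x hf hg hF hG h1 h2
    have hev : deriv (fun y => f y * g y) =ᶠ[𝓝 x]
        fun y => deriv f y * g y + f y * deriv g y := by
      filter_upwards [hf.eventually_analyticAt, hg.eventually_analyticAt] with y hfy hgy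
      exact deriv_fun_mul hfy.differentiableAt hgy.differentiableAt
    have hev' : deriv (fun y => F y * G y) =ᶠ[𝓝 x]
        fun y => deriv F y * G y + F y * deriv G y := by
      filter_upwards [hF.eventually_analyticAt, hG.eventually_analyticAt] with y hfy hgy
      exact deriv_fun_mul hfy.differentiableAt hgy.differentiableAt
    rw [iteratedDeriv_succ', iteratedDeriv_succ', hev.iteratedDeriv_eq n,
      hev'.iteratedDeriv_eq n,
      iteratedDeriv_add_at n ((analyticAt_deriv hf).fun_mul hg) (hf.fun_mul (analyticAt_deriv hg)),
      iteratedDeriv_add_at n ((analyticAt_deriv hF).fun_mul hG) (hF.fun_mul (analyticAt_deriv hG))]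
    congr 1
    · exact ih (analyticAt_deriv hf) hg (analyticAt_deriv hF) hG h1.deriv' (h2.mono n.le_succ)
    · exact ih hf (analyticAt_deriv hg) hF (analyticAt_deriv hG) (h1.mono n.le_succ) h2.deriv'

lemma DEq.mul {n : ℕ} {f g F G : ℂ → ℂ} (hf : AnalyticAt ℂ f x) (hg : AnalyticAt ℂ g x)
    (hF : AnalyticAt ℂ F x) (hG : AnalyticAt ℂ G x)
    (h1 : DEq x n f F) (h2 : DEq x n g G) :
    DEq x n (fun y => f y * g y) (fun y => F y * G y) :=
  fun m hm => deq_mul_aux m hf hg hF hG (h1.mono hm) (h2.mono hm)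

lemma DEq.sub {n : ℕ} {f g F G : ℂ → ℂ} (hf : AnalyticAt ℂ f x) (hg : AnalyticAt ℂ g x)
    (hF : AnalyticAt ℂ F x) (hG : AnalyticAt ℂ G x)
    (h1 : DEq x n f F) (h2 : DEq x n g G) :
    DEq x n (fun y => f y - g y) (fun y => F y - G y) := by
  simp only [sub_eq_add_neg]
  exact DEq.add hf hg.neg hF hG.neg h1 h2.neg

lemma DEq.pow {n : ℕ} {f F : ℂ → ℂ} (hf : AnalyticAt ℂ f x) (hF : AnalyticAt ℂ F x)
    (h : DEq x n f F) (p : ℕ) :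
    DEq x n (fun y => f y ^ p) (fun y => F y ^ p) := by
  induction p with
  | zero => simp only [pow_zero]; exact DEq.refl n _
  | succ p ih =>
    simp only [pow_succ]
    exact DEq.mul (hf.pow p) hf (hF.pow p) hF ih h

lemma DEq.inv : ∀ (n : ℕ) {f F : ℂ → ℂ} {x : ℂ}, AnalyticAt ℂ f x → AnalyticAt ℂ F x →
    f x ≠ 0 → DEq x n f F →
    DEq x n (fun y => (f y)⁻¹) (fun y => (F y)⁻¹) := by
  intro n
  induction n with
  | zero =>
    intro f F x _ _ _ h m hm
    interval_cases m
    simp only [iteratedDeriv_zero]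
    rw [h.apply]
  | succ n ih =>
    intro f F x hf hF h0 h
    have hF0 : F x ≠ 0 := h.apply ▸ h0
    have base : DEq x n (fun y => (f y)⁻¹) (fun y => (F y)⁻¹) :=
      ih hf hF h0 (h.mono n.le_succ)
    intro m hm
    rcases Nat.lt_succ_iff_lt_or_eq.mp (Nat.lt_succ_of_le hm) with hm' | hm'
    · exact base m (by omega)
    · subst hm'
      have hev : deriv (fun y => (f y)⁻¹) =ᶠ[𝓝 x]
          fun y => (-(deriv f y)) * ((f y)⁻¹ * (f y)⁻¹) := by
        filter_upwards [hf.eventually_analyticAt, hf.continuousAt.eventually_ne h0] with y hfy hy0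
        rw [deriv_fun_inv'' hfy.differentiableAt hy0, div_eq_mul_inv, pow_two, mul_inv, neg_mul]
      have hev' : deriv (fun y => (F y)⁻¹) =ᶠ[𝓝 x]
          fun y => (-(deriv F y)) * ((F y)⁻¹ * (F y)⁻¹) := by
        filter_upwards [hF.eventually_analyticAt, hF.continuousAt.eventually_ne hF0] with y hfy hy0
        rw [deriv_fun_inv'' hfy.differentiableAt hy0, div_eq_mul_inv, pow_two, mul_inv, neg_mul]
      rw [iteratedDeriv_succ', iteratedDeriv_succ', hev.iteratedDeriv_eq n,
        hev'.iteratedDeriv_eq n]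
      have hmul : DEq x n (fun y => (-(deriv f y)) * ((f y)⁻¹ * (f y)⁻¹))
          (fun y => (-(deriv F y)) * ((F y)⁻¹ * (F y)⁻¹)) :=
        DEq.mul (analyticAt_deriv hf).neg ((hf.inv h0).mul (hf.inv h0))
          (analyticAt_deriv hF).neg ((hF.inv hF0).mul (hF.inv hF0))
          h.deriv'.neg
          (DEq.mul (hf.inv h0) (hf.inv h0) (hF.inv hF0) (hF.inv hF0) base base)
      exact hmul n le_rfl

lemma DEq.sum {n : ℕ} {s : Finset ℕ} {f g : ℕ → ℂ → ℂ}
    (hf : ∀ k ∈ s, AnalyticAt ℂ (f k) x) (hg : ∀ k ∈ s, AnalyticAt ℂ (g k) x)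
    (h : ∀ k ∈ s, DEq x n (f k) (g k)) :
    DEq x n (fun y => ∑ k ∈ s, f k y) (fun y => ∑ k ∈ s, g k y) := by
  classical
  induction s using Finset.induction with
  | empty => simp only [Finset.sum_empty]; exact DEq.refl n _
  | @insert a s' hk ih =>
    simp only [Finset.sum_insert hk]
    exact DEq.add (hf a (Finset.mem_insert_self a s'))
      (Finset.analyticAt_fun_sum _ fun k hks => hf k (Finset.mem_insert_of_mem hks))
      (hg a (Finset.mem_insert_self a s'))
      (Finset.analyticAt_fun_sum _ fun k hks => hg k (Finset.mem_insert_of_mem hks))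
      (h a (Finset.mem_insert_self a s'))
      (ih (fun k hks => hf k (Finset.mem_insert_of_mem hks))
        (fun k hks => hg k (Finset.mem_insert_of_mem hks))
        (fun k hks => h k (Finset.mem_insert_of_mem hks)))

lemma tlu_iter {F : ℕ → ℂ → ℂ} {f : ℂ → ℂ} {U : Set ℂ} (hU : IsOpen U)
    (h : TendstoLocallyUniformlyOn F f atTop U) (hF : ∀ N, DifferentiableOn ℂ (F N) U) :
    ∀ n : ℕ, TendstoLocallyUniformlyOn (fun N => deriv^[n] (F N)) (deriv^[n] f) atTop U ∧
      ∀ N, DifferentiableOn ℂ (deriv^[n] (F N)) U := by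
  intro n
  induction n with
  | zero => exact ⟨h, by simpa using hF⟩
  | succ n ih =>
    obtain ⟨h1, h2⟩ := ih
    have h3 : TendstoLocallyUniformlyOn (fun N => deriv (deriv^[n] (F N)))
        (deriv (deriv^[n] f)) atTop U :=
      h1.deriv (Eventually.of_forall h2) hU
    refine ⟨?_, ?_⟩
    · simpa only [Function.iterate_succ_apply'] using h3
    · intro N
      have := (((h2 N).analyticOnNhd hU).deriv).differentiableOn
      simpa only [Function.iterate_succ_apply'] using this

lemma tlu_iteratedDeriv_tendsto {F : ℕ → ℂ → ℂ} {f : ℂ → ℂ} {U : Set ℂ} {x : ℂ}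
    (hU : IsOpen U) (h : TendstoLocallyUniformlyOn F f atTop U)
    (hF : ∀ N, DifferentiableOn ℂ (F N) U) (hx : x ∈ U) (n : ℕ) :
    Tendsto (fun N => iteratedDeriv n (F N) x) atTop (𝓝 (iteratedDeriv n f x)) := by
  simp only [iteratedDeriv_eq_iterate]
  exact (tlu_iter hU h hF n).1.tendsto_at hx

lemma tlu_deq {F G : ℕ → ℂ → ℂ} {f g : ℂ → ℂ} {U : Set ℂ} {x : ℂ} (hU : IsOpen U)
    (hf : TendstoLocallyUniformlyOn F f atTop U)
    (hg : TendstoLocallyUniformlyOn G g atTop U)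
    (hF : ∀ N, DifferentiableOn ℂ (F N) U) (hG : ∀ N, DifferentiableOn ℂ (G N) U)
    (hx : x ∈ U) (n : ℕ)
    (h : ∀ N, iteratedDeriv n (F N) x = iteratedDeriv n (G N) x) :
    iteratedDeriv n f x = iteratedDeriv n g x :=
  tendsto_nhds_unique
    ((tlu_iteratedDeriv_tendsto hU hf hF hx n).congr h)
    (tlu_iteratedDeriv_tendsto hU hg hG hx n)

lemma eqOn_ball_of_iteratedDeriv_eq {ζ x : ℂ} {R : ℝ} {f g : ℂ → ℂ}
    (hf : DifferentiableOn ℂ f (Metric.ball ζ R)) (hg : DifferentiableOn ℂ g (Metric.ball ζ R))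
    (hx : x ∈ Metric.ball ζ R)
    (h : ∀ m : ℕ, iteratedDeriv m f x = iteratedDeriv m g x) :
    Set.EqOn f g (Metric.ball ζ R) := by
  have hD : IsOpen (Metric.ball ζ R) := Metric.isOpen_ball
  obtain ⟨ε, hε, hball⟩ := Metric.isOpen_iff.mp hD x hx
  have heq : Set.EqOn f g (Metric.ball x ε) := by
    intro w hw
    rw [← Complex.taylorSeries_eq_on_ball' hw (hf.mono hball),
      ← Complex.taylorSeries_eq_on_ball' hw (hg.mono hball)]
    exact tsum_congr fun m => by rw [h m]
  have hev : f =ᶠ[𝓝 x] g := eventuallyEq_of_mem (Metric.ball_mem_nhds x hε) heq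
  exact (hf.analyticOnNhd hD).eqOn_of_preconnected_of_eventuallyEq
    (hg.analyticOnNhd hD) (convex_ball ζ R).isPreconnected hx hev

variable {D : Set ℂ} {c : ℂ} {a₁ a₂ : ℂ → ℂ} {z : ℕ → ℂ → ℂ}

lemma partial_pow_diff (h : IsHeatODESolution D c a₁ a₂ z) (p N : ℕ) :
    DifferentiableOn ℂ (fun τ => ∑ k ∈ Finset.range N, ((z k τ - c) ^ p)⁻¹) D := by
  apply DifferentiableOn.fun_sum
  intro k _
  exact (((h.diff_z k).sub (differentiableOn_const c)).pow p).inv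
    (fun τ hτ => pow_ne_zero _ (sub_ne_zero.mpr (h.ne_base τ hτ k)))

lemma summand_diff (h : IsHeatODESolution D c a₁ a₂ z) (j k : ℕ) :
    DifferentiableOn ℂ (fun τ => odeSummand c z j k τ) D := by
  unfold odeSummand
  refine DifferentiableOn.add (DifferentiableOn.add ?_ ?_) ?_
  · by_cases hk : k = j
    · simp only [if_pos hk]; exact differentiableOn_const 0
    · simp only [if_neg hk]
      exact ((h.diff_z j).sub (h.diff_z k)).inv
        (fun τ hτ => sub_ne_zero.mpr (h.distinct τ hτ j k (Ne.symm hk)))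
  · exact ((h.diff_z k).sub (differentiableOn_const c)).inv
      (fun τ hτ => sub_ne_zero.mpr (h.ne_base τ hτ k))
  · exact DifferentiableOn.div ((h.diff_z j).sub (differentiableOn_const c))
      (((h.diff_z k).sub (differentiableOn_const c)).pow 2)
      (fun τ hτ => pow_ne_zero _ (sub_ne_zero.mpr (h.ne_base τ hτ k)))

lemma partial_ode_diff (h : IsHeatODESolution D c a₁ a₂ z) (j N : ℕ) :
    DifferentiableOn ℂ (fun τ => ∑ k ∈ Finset.range N, odeSummand c z j k τ) D := by
  apply DifferentiableOn.fun_sum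
  intro k _
  exact summand_diff h j k

lemma tsum_cube_diff (h : IsHeatODESolution D c a₁ a₂ z) (hD : IsOpen D) :
    DifferentiableOn ℂ (fun τ => ∑' k : ℕ, ((z k τ - c) ^ 3)⁻¹) D :=
  h.conv_cube.differentiableOn (Eventually.of_forall (partial_pow_diff h 3)) hD

lemma tsum_fourth_diff (h : IsHeatODESolution D c a₁ a₂ z) (hD : IsOpen D) :
    DifferentiableOn ℂ (fun τ => ∑' k : ℕ, ((z k τ - c) ^ 4)⁻¹) D :=
  h.conv_fourth.differentiableOn (Eventually.of_forall (partial_pow_diff h 4)) hD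

lemma tsum_ode_diff (h : IsHeatODESolution D c a₁ a₂ z) (hD : IsOpen D) (j : ℕ) :
    DifferentiableOn ℂ (fun τ => ∑' k : ℕ, odeSummand c z j k τ) D :=
  (h.conv_z j).differentiableOn (Eventually.of_forall (partial_ode_diff h j)) hD

end HeatODEAux


open HeatODEAux
open Topology

set_option maxHeartbeats 1000000 in
/-- uniqueness for the infinite ODE system: two holomorphic solutions on an open
disk that agree at one point of the disk agree everywhere on the disk. -/

theorem heat_ode_system_unique (ζ : ℂ) (R : ℝ) (hR : 0 < R) (c : ℂ)
    (a₁ a₂ b₁ b₂ : ℂ → ℂ) (z zz : ℕ → ℂ → ℂ)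
    (hsol : IsHeatODESolution (Metric.ball ζ R) c a₁ a₂ z)
    (hsol' : IsHeatODESolution (Metric.ball ζ R) c b₁ b₂ zz)
    (τ₀ : ℂ) (hτ₀ : τ₀ ∈ Metric.ball ζ R)
    (ha₁ : a₁ τ₀ = b₁ τ₀) (ha₂ : a₂ τ₀ = b₂ τ₀) (hz : ∀ j, z j τ₀ = zz j τ₀) :
    Set.EqOn a₁ b₁ (Metric.ball ζ R) ∧ Set.EqOn a₂ b₂ (Metric.ball ζ R) ∧
      ∀ j, Set.EqOn (z j) (zz j) (Metric.ball ζ R) := by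
  have hD : IsOpen (Metric.ball ζ R) := Metric.isOpen_ball
  -- pointwise analyticity at τ₀
  have Aa₁ : AnalyticAt ℂ a₁ τ₀ := (hsol.diff_a₁.analyticOnNhd hD) τ₀ hτ₀
  have Aa₂ : AnalyticAt ℂ a₂ τ₀ := (hsol.diff_a₂.analyticOnNhd hD) τ₀ hτ₀
  have Ab₁ : AnalyticAt ℂ b₁ τ₀ := (hsol'.diff_a₁.analyticOnNhd hD) τ₀ hτ₀
  have Ab₂ : AnalyticAt ℂ b₂ τ₀ := (hsol'.diff_a₂.analyticOnNhd hD) τ₀ hτ₀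
  have Az : ∀ k, AnalyticAt ℂ (z k) τ₀ := fun k => ((hsol.diff_z k).analyticOnNhd hD) τ₀ hτ₀
  have Azz : ∀ k, AnalyticAt ℂ (zz k) τ₀ := fun k => ((hsol'.diff_z k).analyticOnNhd hD) τ₀ hτ₀
  have Azc : ∀ k, AnalyticAt ℂ (fun τ => z k τ - c) τ₀ := fun k => (Az k).sub analyticAt_const
  have Azzc : ∀ k, AnalyticAt ℂ (fun τ => zz k τ - c) τ₀ := fun k => (Azz k).sub analyticAt_const
  have AS3 : AnalyticAt ℂ (fun τ => ∑' k : ℕ, ((z k τ - c) ^ 3)⁻¹) τ₀ :=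
    ((tsum_cube_diff hsol hD).analyticOnNhd hD) τ₀ hτ₀
  have AS3' : AnalyticAt ℂ (fun τ => ∑' k : ℕ, ((zz k τ - c) ^ 3)⁻¹) τ₀ :=
    ((tsum_cube_diff hsol' hD).analyticOnNhd hD) τ₀ hτ₀
  have AS4 : AnalyticAt ℂ (fun τ => ∑' k : ℕ, ((z k τ - c) ^ 4)⁻¹) τ₀ :=
    ((tsum_fourth_diff hsol hD).analyticOnNhd hD) τ₀ hτ₀
  have AS4' : AnalyticAt ℂ (fun τ => ∑' k : ℕ, ((zz k τ - c) ^ 4)⁻¹) τ₀ :=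
    ((tsum_fourth_diff hsol' hD).analyticOnNhd hD) τ₀ hτ₀
  have AT : ∀ j, AnalyticAt ℂ (fun τ => ∑' k : ℕ, odeSummand c z j k τ) τ₀ :=
    fun j => ((tsum_ode_diff hsol hD j).analyticOnNhd hD) τ₀ hτ₀
  have AT' : ∀ j, AnalyticAt ℂ (fun τ => ∑' k : ℕ, odeSummand c zz j k τ) τ₀ :=
    fun j => ((tsum_ode_diff hsol' hD j).analyticOnNhd hD) τ₀ hτ₀
  have Aterm : ∀ j k, AnalyticAt ℂ (fun τ => odeSummand c z j k τ) τ₀ :=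
    fun j k => ((summand_diff hsol j k).analyticOnNhd hD) τ₀ hτ₀
  have Aterm' : ∀ j k, AnalyticAt ℂ (fun τ => odeSummand c zz j k τ) τ₀ :=
    fun j k => ((summand_diff hsol' j k).analyticOnNhd hD) τ₀ hτ₀
  -- the main induction on the order of derivatives
  have key : ∀ n : ℕ, DEq τ₀ n a₁ b₁ ∧ DEq τ₀ n a₂ b₂ ∧ ∀ j, DEq τ₀ n (z j) (zz j) := by
    intro n
    induction n with
    | zero =>
      refine ⟨?_, ?_, fun j => ?_⟩ <;> intro m hm <;> interval_cases m <;>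
        simp only [iteratedDeriv_zero]
      · exact ha₁
      · exact ha₂
      · exact hz j
    | succ n ih =>
      obtain ⟨ih1, ih2, ih3⟩ := ih
      -- building blocks at level n
      have hzc : ∀ k, DEq τ₀ n (fun τ => z k τ - c) (fun τ => zz k τ - c) := fun k =>
        DEq.sub (Az k) analyticAt_const (Azz k) analyticAt_const (ih3 k) (DEq.refl n _)
      have hpow : ∀ (p : ℕ) (k : ℕ), DEq τ₀ n (fun τ => ((z k τ - c) ^ p)⁻¹)
          (fun τ => ((zz k τ - c) ^ p)⁻¹) := fun p k =>
        DEq.inv n ((Azc k).pow p) ((Azzc k).pow p)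
          (pow_ne_zero p (sub_ne_zero.mpr (hsol.ne_base τ₀ hτ₀ k)))
          (DEq.pow (Azc k) (Azzc k) (hzc k) p)
      have hS3 : DEq τ₀ n (fun τ => ∑' k : ℕ, ((z k τ - c) ^ 3)⁻¹)
          (fun τ => ∑' k : ℕ, ((zz k τ - c) ^ 3)⁻¹) := by
        intro m hm
        refine tlu_deq hD hsol.conv_cube hsol'.conv_cube
          (partial_pow_diff hsol 3) (partial_pow_diff hsol' 3) hτ₀ m (fun N => ?_)
        exact (DEq.sum (f := fun k τ => ((z k τ - c) ^ 3)⁻¹)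
          (g := fun k τ => ((zz k τ - c) ^ 3)⁻¹)
          (fun k _ => ((Azc k).pow 3).inv
            (pow_ne_zero 3 (sub_ne_zero.mpr (hsol.ne_base τ₀ hτ₀ k))))
          (fun k _ => ((Azzc k).pow 3).inv
            (pow_ne_zero 3 (sub_ne_zero.mpr (hsol'.ne_base τ₀ hτ₀ k))))
          (fun k _ => (hpow 3 k).mono hm)) m le_rfl
      have hS4 : DEq τ₀ n (fun τ => ∑' k : ℕ, ((z k τ - c) ^ 4)⁻¹)
          (fun τ => ∑' k : ℕ, ((zz k τ - c) ^ 4)⁻¹) := by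
        intro m hm
        refine tlu_deq hD hsol.conv_fourth hsol'.conv_fourth
          (partial_pow_diff hsol 4) (partial_pow_diff hsol' 4) hτ₀ m (fun N => ?_)
        exact (DEq.sum (f := fun k τ => ((z k τ - c) ^ 4)⁻¹)
          (g := fun k τ => ((zz k τ - c) ^ 4)⁻¹)
          (fun k _ => ((Azc k).pow 4).inv
            (pow_ne_zero 4 (sub_ne_zero.mpr (hsol.ne_base τ₀ hτ₀ k))))
          (fun k _ => ((Azzc k).pow 4).inv
            (pow_ne_zero 4 (sub_ne_zero.mpr (hsol'.ne_base τ₀ hτ₀ k))))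
          (fun k _ => (hpow 4 k).mono hm)) m le_rfl
      have hterm : ∀ j k, DEq τ₀ n (fun τ => odeSummand c z j k τ)
          (fun τ => odeSummand c zz j k τ) := by
        intro j k
        have h2 : DEq τ₀ n (fun τ => (z k τ - c)⁻¹) (fun τ => (zz k τ - c)⁻¹) :=
          DEq.inv n (Azc k) (Azzc k) (sub_ne_zero.mpr (hsol.ne_base τ₀ hτ₀ k)) (hzc k)
        have h3 : DEq τ₀ n (fun τ => (z j τ - c) * ((z k τ - c) ^ 2)⁻¹)
            (fun τ => (zz j τ - c) * ((zz k τ - c) ^ 2)⁻¹) :=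
          DEq.mul (Azc j) (((Azc k).pow 2).inv
              (pow_ne_zero 2 (sub_ne_zero.mpr (hsol.ne_base τ₀ hτ₀ k))))
            (Azzc j) (((Azzc k).pow 2).inv
              (pow_ne_zero 2 (sub_ne_zero.mpr (hsol'.ne_base τ₀ hτ₀ k))))
            (hzc j) (hpow 2 k)
        have hAinv : AnalyticAt ℂ (fun τ => (z k τ - c)⁻¹) τ₀ :=
          (Azc k).inv (sub_ne_zero.mpr (hsol.ne_base τ₀ hτ₀ k))
        have hAinv' : AnalyticAt ℂ (fun τ => (zz k τ - c)⁻¹) τ₀ :=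
          (Azzc k).inv (sub_ne_zero.mpr (hsol'.ne_base τ₀ hτ₀ k))
        have hA3 : AnalyticAt ℂ (fun τ => (z j τ - c) * ((z k τ - c) ^ 2)⁻¹) τ₀ :=
          (Azc j).mul (((Azc k).pow 2).inv
            (pow_ne_zero 2 (sub_ne_zero.mpr (hsol.ne_base τ₀ hτ₀ k))))
        have hA3' : AnalyticAt ℂ (fun τ => (zz j τ - c) * ((zz k τ - c) ^ 2)⁻¹) τ₀ :=
          (Azzc j).mul (((Azzc k).pow 2).inv
            (pow_ne_zero 2 (sub_ne_zero.mpr (hsol'.ne_base τ₀ hτ₀ k))))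
        unfold odeSummand
        simp only [div_eq_mul_inv]
        by_cases hk : k = j
        · simp only [if_pos hk]
          exact DEq.add ((analyticAt_const (v := (0:ℂ))).add hAinv) hA3
            ((analyticAt_const (v := (0:ℂ))).add hAinv') hA3'
            (DEq.add analyticAt_const hAinv analyticAt_const hAinv' (DEq.refl n _) h2) h3
        · simp only [if_neg hk]
          have hA1 : AnalyticAt ℂ (fun τ => (z j τ - z k τ)⁻¹) τ₀ :=
            ((Az j).sub (Az k)).inv
              (sub_ne_zero.mpr (hsol.distinct τ₀ hτ₀ j k (Ne.symm hk)))
          have hA1' : AnalyticAt ℂ (fun τ => (zz j τ - zz k τ)⁻¹) τ₀ :=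
            ((Azz j).sub (Azz k)).inv
              (sub_ne_zero.mpr (hsol'.distinct τ₀ hτ₀ j k (Ne.symm hk)))
          have h1 : DEq τ₀ n (fun τ => (z j τ - z k τ)⁻¹) (fun τ => (zz j τ - zz k τ)⁻¹) :=
            DEq.inv n ((Az j).sub (Az k)) ((Azz j).sub (Azz k))
              (sub_ne_zero.mpr (hsol.distinct τ₀ hτ₀ j k (Ne.symm hk)))
              (DEq.sub (Az j) (Az k) (Azz j) (Azz k) (ih3 j) (ih3 k))
          exact DEq.add (hA1.add hAinv) hA3 (hA1'.add hAinv') hA3'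
            (DEq.add hA1 hAinv hA1' hAinv' h1 h2) h3
      have hT : ∀ j, DEq τ₀ n (fun τ => ∑' k : ℕ, odeSummand c z j k τ)
          (fun τ => ∑' k : ℕ, odeSummand c zz j k τ) := by
        intro j m hm
        refine tlu_deq hD (hsol.conv_z j) (hsol'.conv_z j)
          (partial_ode_diff hsol j) (partial_ode_diff hsol' j) hτ₀ m (fun N => ?_)
        exact (DEq.sum (f := fun k τ => odeSummand c z j k τ)
          (g := fun k τ => odeSummand c zz j k τ)
          (fun k _ => Aterm j k) (fun k _ => Aterm' j k)
          (fun k _ => (hterm j k).mono hm)) m le_rfl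
      -- the three top-level steps
      have step1 : iteratedDeriv (n + 1) a₁ τ₀ = iteratedDeriv (n + 1) b₁ τ₀ := by
        have e1 : deriv a₁ =ᶠ[𝓝 τ₀]
            fun τ => -(a₁ τ * a₂ τ) + ∑' k : ℕ, ((z k τ - c) ^ 3)⁻¹ :=
          eventually_of_mem (hD.mem_nhds hτ₀) hsol.ode_a₁
        have e1' : deriv b₁ =ᶠ[𝓝 τ₀]
            fun τ => -(b₁ τ * b₂ τ) + ∑' k : ℕ, ((zz k τ - c) ^ 3)⁻¹ :=
          eventually_of_mem (hD.mem_nhds hτ₀) hsol'.ode_a₁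
        rw [iteratedDeriv_succ', iteratedDeriv_succ', e1.iteratedDeriv_eq n,
          e1'.iteratedDeriv_eq n]
        exact (DEq.add (Aa₁.mul Aa₂).neg AS3 (Ab₁.mul Ab₂).neg AS3'
          (DEq.mul Aa₁ Aa₂ Ab₁ Ab₂ ih1 ih2).neg hS3) n le_rfl
      have step2 : iteratedDeriv (n + 1) a₂ τ₀ = iteratedDeriv (n + 1) b₂ τ₀ := by
        have e2 : deriv a₂ =ᶠ[𝓝 τ₀]
            fun τ => -(a₂ τ) ^ 2 + 2 * a₁ τ * (∑' k : ℕ, ((z k τ - c) ^ 3)⁻¹) +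
              3 * ∑' k : ℕ, ((z k τ - c) ^ 4)⁻¹ :=
          eventually_of_mem (hD.mem_nhds hτ₀) hsol.ode_a₂
        have e2' : deriv b₂ =ᶠ[𝓝 τ₀]
            fun τ => -(b₂ τ) ^ 2 + 2 * b₁ τ * (∑' k : ℕ, ((zz k τ - c) ^ 3)⁻¹) +
              3 * ∑' k : ℕ, ((zz k τ - c) ^ 4)⁻¹ :=
          eventually_of_mem (hD.mem_nhds hτ₀) hsol'.ode_a₂
        rw [iteratedDeriv_succ', iteratedDeriv_succ', e2.iteratedDeriv_eq n,
          e2'.iteratedDeriv_eq n]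
        have d1 : DEq τ₀ n (fun τ => -(a₂ τ) ^ 2) (fun τ => -(b₂ τ) ^ 2) :=
          (DEq.pow Aa₂ Ab₂ ih2 2).neg
        have d2 : DEq τ₀ n (fun τ => 2 * a₁ τ * (∑' k : ℕ, ((z k τ - c) ^ 3)⁻¹))
            (fun τ => 2 * b₁ τ * (∑' k : ℕ, ((zz k τ - c) ^ 3)⁻¹)) :=
          DEq.mul (analyticAt_const.mul Aa₁) AS3 (analyticAt_const.mul Ab₁) AS3'
            (DEq.mul analyticAt_const Aa₁ analyticAt_const Ab₁ (DEq.refl n _) ih1) hS3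
        have d3 : DEq τ₀ n (fun τ => 3 * ∑' k : ℕ, ((z k τ - c) ^ 4)⁻¹)
            (fun τ => 3 * ∑' k : ℕ, ((zz k τ - c) ^ 4)⁻¹) :=
          DEq.mul analyticAt_const AS4 analyticAt_const AS4' (DEq.refl n _) hS4
        have hA12 : AnalyticAt ℂ
            (fun τ => -(a₂ τ) ^ 2 + 2 * a₁ τ * (∑' k : ℕ, ((z k τ - c) ^ 3)⁻¹)) τ₀ :=
          ((Aa₂.pow 2).neg).add ((analyticAt_const.mul Aa₁).mul AS3)
        have hA12' : AnalyticAt ℂ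
            (fun τ => -(b₂ τ) ^ 2 + 2 * b₁ τ * (∑' k : ℕ, ((zz k τ - c) ^ 3)⁻¹)) τ₀ :=
          ((Ab₂.pow 2).neg).add ((analyticAt_const.mul Ab₁).mul AS3')
        exact (DEq.add hA12 (analyticAt_const.mul AS4) hA12' (analyticAt_const.mul AS4')
          (DEq.add ((Aa₂.pow 2).neg) ((analyticAt_const.mul Aa₁).mul AS3)
            ((Ab₂.pow 2).neg) ((analyticAt_const.mul Ab₁).mul AS3') d1 d2) d3) n le_rfl
      have stepz : ∀ j, iteratedDeriv (n + 1) (z j) τ₀ = iteratedDeriv (n + 1) (zz j) τ₀ := by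
        intro j
        have e3 : deriv (z j) =ᶠ[𝓝 τ₀]
            fun τ => a₁ τ + a₂ τ * (z j τ - c) + ∑' k : ℕ, odeSummand c z j k τ :=
          eventually_of_mem (hD.mem_nhds hτ₀) (hsol.ode_z j)
        have e3' : deriv (zz j) =ᶠ[𝓝 τ₀]
            fun τ => b₁ τ + b₂ τ * (zz j τ - c) + ∑' k : ℕ, odeSummand c zz j k τ :=
          eventually_of_mem (hD.mem_nhds hτ₀) (hsol'.ode_z j)
        rw [iteratedDeriv_succ', iteratedDeriv_succ', e3.iteratedDeriv_eq n,
          e3'.iteratedDeriv_eq n]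
        exact (DEq.add (Aa₁.add (Aa₂.mul (Azc j))) (AT j)
          (Ab₁.add (Ab₂.mul (Azzc j))) (AT' j)
          (DEq.add Aa₁ (Aa₂.mul (Azc j)) Ab₁ (Ab₂.mul (Azzc j)) ih1
            (DEq.mul Aa₂ (Azc j) Ab₂ (Azzc j) ih2 (hzc j))) (hT j)) n le_rfl
      refine ⟨?_, ?_, fun j => ?_⟩ <;> intro m hm
      · by_cases h' : m ≤ n
        · exact ih1 m h'
        · have : m = n + 1 := by omega
          subst this; exact step1
      · by_cases h' : m ≤ n
        · exact ih2 m h'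
        · have : m = n + 1 := by omega
          subst this; exact step2
      · by_cases h' : m ≤ n
        · exact ih3 j m h'
        · have : m = n + 1 := by omega
          subst this; exact stepz j
  exact ⟨eqOn_ball_of_iteratedDeriv_eq hsol.diff_a₁ hsol'.diff_a₁ hτ₀
      (fun m => (key m).1 m le_rfl),
    eqOn_ball_of_iteratedDeriv_eq hsol.diff_a₂ hsol'.diff_a₂ hτ₀
      (fun m => (key m).2.1 m le_rfl),
    fun j => eqOn_ball_of_iteratedDeriv_eq (hsol.diff_z j) (hsol'.diff_z j) hτ₀
      (fun m => (key m).2.2 j m le_rfl)⟩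

end
end
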